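/- arXiv:2503.05599 — 4 statements merged into one kernel-verified Lean document; each statement's English description precedes it below -/
import Mathlib

section
/- For every complex number t with |t| ≤ 1 and t ≠ 1, one has 2·Σ_{k=1}^∞ C(2k,k)² (t/16)^k (2H_{2k} − H_k) = −(Σ_{k=0}^∞ C(2k,k)² (t/16)^k) · Log(1−t). -/
/-- The `n`-th harmonic number `H_n = ∑_{j=1}^n 1/j`. -/
noncomputable def H (n : ℕ) : ℝ := ∑ j ∈ Finset.range n, (1 : ℝ) / (j + 1)

noncomputable def bb (k : ℕ) : ℝ := (Nat.choose (2*k) k : ℝ)^2 / 16^k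

lemma bb_pos (k : ℕ) : 0 < bb k := by
  apply div_pos
  · have : 0 < Nat.choose (2*k) k := Nat.choose_pos (by omega)
    positivity
  · positivity

lemma bb_succ (n : ℕ) : bb (n+1) = bb n * (2*n+1)^2 / (4*(n+1)^2) := by
  have h := Nat.succ_mul_centralBinom_succ n
  have h' : ((n:ℝ)+1) * (Nat.choose (2*(n+1)) (n+1) : ℝ)
      = 2 * (2*n+1) * (Nat.choose (2*n) n : ℝ) := by
    have := congrArg (Nat.cast : ℕ → ℝ) h
    push_cast [Nat.centralBinom] at this
    linarith [this]
  have hn1 : ((n:ℝ)+1) ≠ 0 := by positivity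
  have h16 : (16:ℝ)^n ≠ 0 := by positivity
  have hc : (Nat.choose (2*(n+1)) (n+1) : ℝ) = 2 * (2*n+1) * (Nat.choose (2*n) n : ℝ) / ((n:ℝ)+1) := by
    field_simp at h' ⊢; linarith
  unfold bb
  rw [hc]
  field_simp
  ring

lemma bb_zero : bb 0 = 1 := by simp [bb]

lemma bb_le_one (k : ℕ) : bb k ≤ 1 := by
  induction k with
  | zero => simp [bb]
  | succ n ih =>
    rw [bb_succ]
    have hp := bb_pos n
    have h1 : (2*(n:ℝ)+1)^2 / (4*((n:ℝ)+1)^2) ≤ 1 := by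
      rw [div_le_one (by positivity)]; nlinarith [Nat.cast_nonneg (α := ℝ) n]
    calc bb n * (2*n+1)^2 / (4*(n+1)^2) = bb n * ((2*(n:ℝ)+1)^2 / (4*((n:ℝ)+1)^2)) := by ring
    _ ≤ 1 * 1 := by
        apply mul_le_mul ih h1 (by positivity) (by norm_num)
    _ = 1 := by norm_num

lemma bb_lb (k : ℕ) : 1 / (4*((k:ℝ)+1)) ≤ bb (k+1) := by
  induction k with
  | zero =>
    have : bb 1 = 1/4 := by rw [show (1:ℕ) = 0+1 from rfl, bb_succ, bb_zero]; norm_num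
    rw [this]; norm_num
  | succ n ih =>
    have hx : (0:ℝ) ≤ (n:ℝ) := Nat.cast_nonneg n
    rw [bb_succ]
    push_cast
    push_cast at ih
    have hp := bb_pos (n+1)
    set x := (n:ℝ) with hxdef
    have key : 1/(4*(x+1+1)) ≤ (1/(4*(x+1)))*((2*(x+1)+1)^2/(4*(x+1+1)^2)) := by
      rw [div_mul_div_comm, one_mul, div_le_div_iff₀ (by positivity) (by positivity)]
      nlinarith
    have h3 : (1/(4*(x+1)))*((2*(x+1)+1)^2/(4*(x+1+1)^2))
        ≤ bb (n+1)*((2*(x+1)+1)^2/(4*(x+1+1)^2)) :=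
      mul_le_mul_of_nonneg_right ih (by positivity)
    rw [mul_div_assoc]
    linarith

lemma H_succ (n : ℕ) : H (n+1) = H n + 1/((n:ℝ)+1) := by
  simp [H, Finset.sum_range_succ]

lemma H_nonneg (n : ℕ) : 0 ≤ H n := by
  apply Finset.sum_nonneg; intro j _; positivity

lemma H_mono {m n : ℕ} (h : m ≤ n) : H m ≤ H n := by
  unfold H
  apply Finset.sum_le_sum_of_subset_of_nonneg (Finset.range_subset_range.mpr h)
  intro j _ _; positivity

lemma two_H_ge (m : ℕ) (hm : 1 ≤ m) : 1 ≤ 2 * H (2*m) - H m := by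
  have h1 : H m ≤ H (2*m) := H_mono (by omega)
  have h2 : H 1 ≤ H (2*m) := H_mono (by omega)
  have : H 1 = 1 := by simp [H]
  linarith

noncomputable def pp (n : ℕ) : ℝ := ∑ j ∈ Finset.range n, bb (n - 1 - j) / ((j:ℝ) + 1)

noncomputable def cc (n : ℕ) : ℝ := 2 * bb n * (2 * H (2*n) - H n)

lemma pp_rec (n : ℕ) :
    ((n:ℝ)+1)^2 * pp (n+1) = ((n:ℝ)+1/2)^2 * pp n + (2*(n:ℝ)+1) * bb n := by
  have hsplit1 : ((n:ℝ)+1)^2 * pp (n+1)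
      = (∑ j ∈ Finset.range (n+1), ((n:ℝ) - j)^2 * bb (n - j) / ((j:ℝ)+1))
        + ∑ j ∈ Finset.range (n+1), (((n:ℝ)+1) + ((n:ℝ) - j)) * bb (n - j) := by
    unfold pp
    rw [Finset.mul_sum, ← Finset.sum_add_distrib]
    apply Finset.sum_congr rfl
    intro j hj
    have hj' : j ≤ n := by simpa [Nat.lt_succ_iff] using hj
    have h1 : ((n+1) - 1 - j) = n - j := by omega
    rw [h1]
    have hj1 : ((j:ℝ)+1) ≠ 0 := by positivity
    field_simp
    ring
  have hsplit2 : ((n:ℝ)+1/2)^2 * pp n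
      = (∑ j ∈ Finset.range n, (((n-1-j : ℕ):ℝ) + 1/2)^2 * bb (n - 1 - j) / ((j:ℝ)+1))
        + ∑ j ∈ Finset.range n, (((n:ℝ)+1) + ((n-1-j : ℕ):ℝ)) * bb (n - 1 - j) := by
    unfold pp
    rw [Finset.mul_sum, ← Finset.sum_add_distrib]
    apply Finset.sum_congr rfl
    intro j hj
    have hj' : j < n := Finset.mem_range.mp hj
    have hcast : ((n - 1 - j : ℕ) : ℝ) = (n:ℝ) - 1 - j := by
      have : n - 1 - j + (1 + j) = n := by omega
      have := congrArg (Nat.cast : ℕ → ℝ) this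
      push_cast at this
      linarith
    rw [hcast]
    have hj1 : ((j:ℝ)+1) ≠ 0 := by positivity
    field_simp
    ring
  have hA : (∑ j ∈ Finset.range (n+1), ((n:ℝ) - j)^2 * bb (n - j) / ((j:ℝ)+1))
      = ∑ j ∈ Finset.range n, (((n-1-j : ℕ):ℝ) + 1/2)^2 * bb (n - 1 - j) / ((j:ℝ)+1) := by
    rw [Finset.sum_range_succ]
    have hz : ((n:ℝ) - n)^2 * bb (n - n) / ((n:ℝ)+1) = 0 := by
      simp
    rw [hz, add_zero]
    apply Finset.sum_congr rfl
    intro j hj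
    have hj' : j < n := Finset.mem_range.mp hj
    have hm : n - j = (n - 1 - j) + 1 := by omega
    have hcast : ((n - 1 - j : ℕ) : ℝ) = (n:ℝ) - 1 - j := by
      have : n - 1 - j + (1 + j) = n := by omega
      have := congrArg (Nat.cast : ℕ → ℝ) this
      push_cast at this
      linarith
    have hrec := bb_succ (n - 1 - j)
    rw [hm, hrec, hcast]
    have hj1 : ((j:ℝ)+1) ≠ 0 := by positivity
    have hd : ((n:ℝ) - 1 - j) + 1 ≠ 0 := by
      rw [← hcast]; push_cast [hm]; positivity
    have hgoal : ((n:ℝ) - j)^2 = (((n:ℝ) - 1 - j) + 1)^2 := by ring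
    rw [hgoal]
    field_simp
    ring
  have hB : (∑ j ∈ Finset.range (n+1), (((n:ℝ)+1) + ((n:ℝ) - j)) * bb (n - j))
      = ∑ i ∈ Finset.range (n+1), (((n:ℝ)+1) + i) * bb i := by
    rw [← Finset.sum_range_reflect (fun i => (((n:ℝ)+1) + i) * bb i) (n+1)]
    apply Finset.sum_congr rfl
    intro j hj
    have hj' : j ≤ n := by simpa [Nat.lt_succ_iff] using hj
    have h1 : n + 1 - 1 - j = n - j := by omega
    have hcast : ((n - j : ℕ) : ℝ) = (n:ℝ) - j := Nat.cast_sub hj'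
    rw [h1, hcast]
  have hC : (∑ j ∈ Finset.range n, (((n:ℝ)+1) + ((n-1-j : ℕ):ℝ)) * bb (n - 1 - j))
      = ∑ i ∈ Finset.range n, (((n:ℝ)+1) + i) * bb i := by
    rw [← Finset.sum_range_reflect (fun i => (((n:ℝ)+1) + i) * bb i) n]
  rw [hsplit1, hsplit2, hA, hB, hC, Finset.sum_range_succ]
  push_cast
  ring

lemma pp_eq_cc (n : ℕ) : pp n = cc n := by
  induction n with
  | zero => simp [pp, cc, H]
  | succ n ih =>
    have hrec := pp_rec n
    rw [ih] at hrec
    have hn1 : ((n:ℝ)+1) ≠ 0 := by positivity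
    have hpp : pp (n+1) = (((n:ℝ)+1/2)^2 * cc n + (2*(n:ℝ)+1) * bb n) / ((n:ℝ)+1)^2 := by
      field_simp at hrec ⊢
      linarith
    rw [hpp]
    unfold cc
    rw [bb_succ]
    have hH2 : H (2*(n+1)) = H (2*n) + 1/(2*(n:ℝ)+1) + 1/(2*(n:ℝ)+2) := by
      have h1 : 2*(n+1) = (2*n+1)+1 := by ring
      rw [h1, H_succ, H_succ]
      push_cast
      ring
    rw [hH2, H_succ]
    push_cast
    field_simp
    ring

lemma cast_term (t : ℂ) (k : ℕ) :
    ((Nat.choose (2*k) k : ℂ))^2 * (t/16)^k = ((bb k : ℝ) : ℂ) * t^k := by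
  unfold bb
  push_cast
  rw [div_pow]
  ring

lemma cc_zero : cc 0 = 0 := by simp [cc, H]

lemma inner_eq (t : ℂ) (n : ℕ) :
    ∑ k ∈ Finset.range (n+1), ((bb k : ℝ):ℂ) * t^k * (t^(n-k) / ((n-k : ℕ):ℂ))
      = ((cc n : ℝ):ℂ) * t^n := by
  rw [Finset.sum_range_succ]
  have h0 : ((bb n : ℝ):ℂ) * t^n * (t^(n-n) / ((n-n : ℕ):ℂ)) = 0 := by
    simp
  rw [h0, add_zero]
  have hsum : ∀ k ∈ Finset.range n,
      ((bb k : ℝ):ℂ) * t^k * (t^(n-k) / ((n-k : ℕ):ℂ))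
        = ((bb k / ((n-k : ℕ):ℝ) : ℝ):ℂ) * t^n := by
    intro k hk
    have hk' : k < n := Finset.mem_range.mp hk
    have hp : t^k * t^(n-k) = t^n := by
      rw [← pow_add]
      congr 1
      omega
    push_cast
    rw [← hp]
    ring
  rw [Finset.sum_congr rfl hsum]
  have : ∑ k ∈ Finset.range n, ((bb k / ((n-k : ℕ):ℝ) : ℝ):ℂ) * t^n
      = ((∑ k ∈ Finset.range n, bb k / ((n-k : ℕ):ℝ) : ℝ):ℂ) * t^n := by
    rw [← Finset.sum_mul]
    norm_cast
  rw [this]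
  congr 2
  have hrefl := Finset.sum_range_reflect (fun k => bb k / ((n-k : ℕ):ℝ)) n
  have hpp : pp n = ∑ j ∈ Finset.range n, bb (n-1-j) / ((n-(n-1-j) : ℕ):ℝ) := by
    unfold pp
    apply Finset.sum_congr rfl
    intro j hj
    have hj' : j < n := Finset.mem_range.mp hj
    have : n - (n-1-j) = j+1 := by omega
    rw [this]
    push_cast
    rfl
  rw [pp_eq_cc] at hpp
  rw [← hrefl, ← hpp]

lemma norm_A (t : ℂ) (k : ℕ) :
    ‖((Nat.choose (2*(k+1)) (k+1) : ℂ))^2 * (t/16)^(k+1) *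
        (2 * (H (2*(k+1)) : ℂ) - (H (k+1) : ℂ))‖
      = bb (k+1) * ‖t‖^(k+1) * (2 * H (2*(k+1)) - H (k+1)) := by
  have hc : ((Nat.choose (2*(k+1)) (k+1) : ℂ))^2 * (t/16)^(k+1) *
        (2 * (H (2*(k+1)) : ℂ) - (H (k+1) : ℂ))
      = ((bb (k+1) : ℝ):ℂ) * t^(k+1) * (((2 * H (2*(k+1)) - H (k+1)) : ℝ):ℂ) := by
    rw [cast_term]
    push_cast
    ring
  rw [hc]
  rw [norm_mul, norm_mul, Complex.norm_real, Complex.norm_real, norm_pow]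
  have h1 : |bb (k+1)| = bb (k+1) := abs_of_pos (bb_pos _)
  have h2 : |2 * H (2*(k+1)) - H (k+1)| = 2 * H (2*(k+1)) - H (k+1) := by
    apply abs_of_nonneg
    have := two_H_ge (k+1) (by omega)
    linarith
  rw [Real.norm_eq_abs, Real.norm_eq_abs, h1, h2]

theorem stmt_0 (t : ℂ) (ht : ‖t‖ ≤ 1) (ht1 : t ≠ 1) :
    2 * ∑' k : ℕ, ((Nat.choose (2 * (k + 1)) (k + 1) : ℂ)) ^ 2 * (t / 16) ^ (k + 1) *
        (2 * (H (2 * (k + 1)) : ℂ) - (H (k + 1) : ℂ)) =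
      -(∑' k : ℕ, ((Nat.choose (2 * k) k : ℂ)) ^ 2 * (t / 16) ^ k) *
        Complex.log (1 - t) := by
  have ht' : ‖t‖ ≤ 1 := ht
  rcases lt_or_eq_of_le ht' with hlt | heq
  · -- case ‖t‖ < 1
    have hf : Summable fun k => ‖((bb k : ℝ):ℂ) * t^k‖ := by
      apply Summable.of_nonneg_of_le (fun k => norm_nonneg _) _
        (summable_geometric_of_lt_one (norm_nonneg t) hlt)
      intro k
      rw [norm_mul, Complex.norm_real, norm_pow]
      have := bb_le_one k
      have := abs_of_pos (bb_pos k)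
      calc |bb k| * ‖t‖^k ≤ 1 * ‖t‖^k := by
            apply mul_le_mul_of_nonneg_right _ (by positivity)
            rw [abs_of_pos (bb_pos k)]; exact bb_le_one k
      _ = ‖t‖^k := one_mul _
    have hg : Summable fun j : ℕ => ‖t^j / (j:ℂ)‖ := by
      apply Summable.of_nonneg_of_le (fun k => norm_nonneg _) _
        (summable_geometric_of_lt_one (norm_nonneg t) hlt)
      intro j
      match j with
      | 0 => simp
      | (j+1) =>
        rw [norm_div, norm_pow]
        apply div_le_self (by positivity)
        rw [Complex.norm_natCast]
        exact_mod_cast Nat.one_le_iff_ne_zero.mpr (by omega)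
    have hlog : HasSum (fun n : ℕ => t^n / (n:ℂ)) (-Complex.log (1-t)) :=
      Complex.hasSum_taylorSeries_neg_log hlt
    have hprod := tsum_mul_tsum_eq_tsum_sum_range_of_summable_norm hf hg
    have hGsum : Summable (fun n => ((cc n : ℝ):ℂ) * t^n) := by
      apply Summable.congr ((summable_norm_sum_mul_range_of_summable_norm hf hg).of_norm)
      intro n
      exact inner_eq t n
    have hstep1 : (∑' k, ((Nat.choose (2*k) k : ℂ))^2 * (t/16)^k)
        = ∑' k, ((bb k : ℝ):ℂ) * t^k := tsum_congr (fun k => cast_term t k)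
    have hstep2 : (∑' k, ((bb k : ℝ):ℂ) * t^k) * (-Complex.log (1-t))
        = ∑' n, ((cc n : ℝ):ℂ) * t^n := by
      rw [← hlog.tsum_eq, hprod]
      exact tsum_congr (fun n => inner_eq t n)
    have hzero : (∑' n, ((cc n : ℝ):ℂ) * t^n)
        = ∑' k, ((cc (k+1) : ℝ):ℂ) * t^(k+1) := by
      rw [Summable.tsum_eq_zero_add hGsum]
      simp [cc_zero]
    have hterm : ∀ k : ℕ,
        2 * (((Nat.choose (2*(k+1)) (k+1) : ℂ))^2 * (t/16)^(k+1) *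
          (2 * (H (2*(k+1)) : ℂ) - (H (k+1) : ℂ)))
        = ((cc (k+1) : ℝ):ℂ) * t^(k+1) := by
      intro k
      rw [cast_term]
      unfold cc
      push_cast
      ring
    calc 2 * ∑' k : ℕ, ((Nat.choose (2*(k+1)) (k+1) : ℂ))^2 * (t/16)^(k+1) *
          (2 * (H (2*(k+1)) : ℂ) - (H (k+1) : ℂ))
        = ∑' k : ℕ, 2 * (((Nat.choose (2*(k+1)) (k+1) : ℂ))^2 * (t/16)^(k+1) *
          (2 * (H (2*(k+1)) : ℂ) - (H (k+1) : ℂ))) := by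
          rw [tsum_mul_left]
      _ = ∑' k, ((cc (k+1) : ℝ):ℂ) * t^(k+1) := tsum_congr hterm
      _ = ∑' n, ((cc n : ℝ):ℂ) * t^n := hzero.symm
      _ = (∑' k, ((bb k : ℝ):ℂ) * t^k) * (-Complex.log (1-t)) := hstep2.symm
      _ = -(∑' k, ((Nat.choose (2*k) k : ℂ))^2 * (t/16)^k) * Complex.log (1-t) := by
          rw [hstep1]; ring
  · -- case ‖t‖ = 1
    have hbase : ¬ Summable (fun k : ℕ => 1 / (4*((k:ℝ)+1))) := by
      intro h
      have h4 := h.mul_left 4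
      have : Summable (fun k : ℕ => 1 / ((k:ℝ)+1)) := by
        apply h4.congr
        intro k
        field_simp
      have : Summable (fun n : ℕ => 1 / (n:ℝ)) := by
        rw [← summable_nat_add_iff 1]
        apply this.congr
        intro k
        push_cast
        rfl
      exact Real.not_summable_one_div_natCast this
    have hnot1 : ¬ Summable (fun k : ℕ => ((Nat.choose (2*k) k : ℂ))^2 * (t/16)^k) := by
      intro h
      have h' : Summable (fun k : ℕ => ((bb k : ℝ):ℂ) * t^k) := by
        apply h.congr; intro k; exact cast_term t k
      have hn : Summable (fun k : ℕ => ‖((bb k : ℝ):ℂ) * t^k‖) := summable_norm_iff.mpr h'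
      have hbb : Summable bb := by
        apply hn.congr
        intro k
        rw [norm_mul, Complex.norm_real, norm_pow, heq, one_pow, mul_one,
          Real.norm_eq_abs, abs_of_pos (bb_pos k)]
      have hshift : Summable (fun k => bb (k+1)) := (summable_nat_add_iff 1).mpr hbb
      apply hbase
      apply Summable.of_nonneg_of_le (fun k => by positivity) (fun k => bb_lb k) hshift
    have hnot2 : ¬ Summable (fun k : ℕ =>
        ((Nat.choose (2*(k+1)) (k+1) : ℂ))^2 * (t/16)^(k+1) *
          (2 * (H (2*(k+1)) : ℂ) - (H (k+1) : ℂ))) := by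
      intro h
      have hn := summable_norm_iff.mpr h
      apply hbase
      apply Summable.of_nonneg_of_le (fun k => by positivity) _ hn
      intro k
      rw [norm_A, heq, one_pow, mul_one]
      have h1 := bb_lb k
      have h2 := two_H_ge (k+1) (by omega)
      have h3 := bb_pos (k+1)
      nlinarith
    rw [tsum_eq_zero_of_not_summable hnot1, tsum_eq_zero_of_not_summable hnot2]
    simp
end

section
/- For every complex number t with |t| ≤ 1 and t ≠ 1, one has Σ_{k=1}^∞ C(2k,k) C(3k,k) (t/27)^k (3H_{3k} − H_k) = −(Σ_{k=0}^∞ C(2k,k) C(3k,k) (t/27)^k) · Log(1−t). -/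
namespace Stmt1Aux

noncomputable def a (n : ℕ) : ℝ :=
  (Nat.choose (2 * n) n * Nat.choose (3 * n) n : ℝ) / 27 ^ n

noncomputable def c (n : ℕ) : ℝ := 3 * H (3 * n) - H n

lemma choose_mul_fact (n : ℕ) :
    (Nat.choose (2 * n) n * Nat.choose (3 * n) n) * (n.factorial ^ 3) = (3 * n).factorial := by
  have h2 : Nat.choose (2 * n) n * n.factorial * n.factorial = (2 * n).factorial := by
    have h := Nat.choose_mul_factorial_mul_factorial (show n ≤ 2 * n by omega)
    simpa [show 2 * n - n = n by omega] using h
  have h3 : Nat.choose (3 * n) n * n.factorial * (2 * n).factorial = (3 * n).factorial := by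
    have h := Nat.choose_mul_factorial_mul_factorial (show n ≤ 3 * n by omega)
    simpa [show 3 * n - n = 2 * n by omega] using h
  calc (Nat.choose (2 * n) n * Nat.choose (3 * n) n) * (n.factorial ^ 3)
      = (Nat.choose (3 * n) n * n.factorial) *
        (Nat.choose (2 * n) n * n.factorial * n.factorial) := by ring
    _ = (Nat.choose (3 * n) n * n.factorial) * (2 * n).factorial := by rw [h2]
    _ = (3 * n).factorial := by rw [← h3]

lemma fact_ne (n : ℕ) : ((n.factorial : ℝ)) ≠ 0 :=
  Nat.cast_ne_zero.mpr n.factorial_pos.ne'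

lemma a_eq (n : ℕ) : a n = ((3 * n).factorial : ℝ) / ((n.factorial : ℝ) ^ 3 * 27 ^ n) := by
  have h : (((3 * n).factorial : ℕ) : ℝ)
      = (Nat.choose (2 * n) n * Nat.choose (3 * n) n : ℝ) * (n.factorial : ℝ) ^ 3 := by
    exact_mod_cast congrArg (fun m : ℕ => (m : ℝ)) (choose_mul_fact n).symm
  rw [a, h]
  have h1 : ((n.factorial : ℝ)) ≠ 0 := fact_ne n
  have h2 : (27 : ℝ) ^ n ≠ 0 := by positivity
  field_simp

lemma a_pos (n : ℕ) : 0 < a n := by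
  have h2 : 0 < Nat.choose (2 * n) n := Nat.choose_pos (by omega)
  have h3 : 0 < Nat.choose (3 * n) n := Nat.choose_pos (by omega)
  have : (0 : ℝ) < (Nat.choose (2 * n) n * Nat.choose (3 * n) n : ℝ) := by
    exact_mod_cast Nat.mul_pos h2 h3
  exact div_pos this (by positivity)

lemma a_rec (n : ℕ) :
    9 * ((n : ℝ) + 1) ^ 2 * a (n + 1) = (3 * (n : ℝ) + 1) * (3 * (n : ℝ) + 2) * a n := by
  have hf : (3 * (n + 1)).factorial
      = (3 * n + 1 + 1 + 1) * ((3 * n + 1 + 1) * ((3 * n + 1) * (3 * n).factorial)) := by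
    rw [show 3 * (n + 1) = 3 * n + 1 + 1 + 1 by omega, Nat.factorial_succ, Nat.factorial_succ,
      Nat.factorial_succ]
  rw [a_eq, a_eq, hf, Nat.factorial_succ]
  have h1 : ((n.factorial : ℝ)) ≠ 0 := fact_ne n
  have h2 : (27 : ℝ) ^ n ≠ 0 := by positivity
  have h3 : ((n : ℝ) + 1) ≠ 0 := by positivity
  push_cast
  field_simp
  ring

lemma a_le_one (n : ℕ) : a n ≤ 1 := by
  induction n with
  | zero => simp [a]
  | succ n ih =>
      have h := a_rec n
      have hp := a_pos n
      nlinarith [sq_nonneg ((n : ℝ) + 1), Nat.cast_nonneg (α := ℝ) n]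

lemma a_lower (n : ℕ) (hn : 1 ≤ n) : 2 / 9 ≤ (n : ℝ) * a n := by
  induction n with
  | zero => omega
  | succ n ih =>
      rcases Nat.eq_or_lt_of_le hn with h1 | h1
      · have : a 1 = 2 / 9 := by
          simp only [a]
          norm_num [Nat.choose]
        simp [← h1, this]
      · have hn' : 1 ≤ n := by omega
        have ihh := ih hn'
        have h := a_rec n
        have hp := a_pos n
        have hc : (1 : ℝ) ≤ (n : ℝ) := by exact_mod_cast hn'
        push_cast
        nlinarith [a_pos (n + 1)]

lemma H_succ (n : ℕ) : H (n + 1) = H n + 1 / ((n : ℝ) + 1) := by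
  simp [H, Finset.sum_range_succ]

lemma H_nonneg (n : ℕ) : 0 ≤ H n := by
  apply Finset.sum_nonneg; intro i _; positivity

lemma H_mono {m n : ℕ} (h : m ≤ n) : H m ≤ H n := by
  apply Finset.sum_le_sum_of_subset_of_nonneg (Finset.range_subset_range.mpr h)
  intro i _ _; positivity

lemma H_le (n : ℕ) : H n ≤ n := by
  induction n with
  | zero => simp [H]
  | succ n ih =>
      rw [H_succ]
      push_cast
      have : 1 / ((n : ℝ) + 1) ≤ 1 := by
        rw [div_le_one (by positivity)]; linarith [Nat.cast_nonneg (α := ℝ) n]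
      linarith

lemma H_one_le (n : ℕ) (hn : 1 ≤ n) : 1 ≤ H n := by
  have : H 1 ≤ H n := H_mono hn
  simpa [H] using this

lemma c_ge_two (n : ℕ) (hn : 1 ≤ n) : 2 ≤ c n := by
  have h1 : H n ≤ H (3 * n) := H_mono (by omega)
  have h2 := H_one_le n hn
  simp only [c]; linarith

lemma c_nonneg (n : ℕ) : 0 ≤ c n := by
  have h1 : H n ≤ H (3 * n) := H_mono (by omega)
  have h2 := H_nonneg n
  simp only [c]; linarith

lemma c_le (n : ℕ) : c n ≤ 9 * n := by
  have h1 := H_le (3 * n)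
  have h2 := H_nonneg n
  simp only [c]; push_cast at h1 ⊢; linarith

lemma c_rec (n : ℕ) : c (n + 1) = c n + 3 / (3 * (n : ℝ) + 1) + 3 / (3 * (n : ℝ) + 2) := by
  have h3 : H (3 * (n + 1)) = H (3 * n) + 1 / (3 * (n : ℝ) + 1) + 1 / (3 * (n : ℝ) + 2)
      + 1 / (3 * (n : ℝ) + 3) := by
    rw [show 3 * (n + 1) = 3 * n + 1 + 1 + 1 by omega, H_succ, H_succ, H_succ]
    push_cast
    ring
  have h4 : (3 : ℝ) * n + 3 ≠ 0 := by positivity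
  have h5 : ((n : ℝ) + 1) ≠ 0 := by positivity
  simp only [c, h3, H_succ]
  field_simp
  ring

lemma star (n : ℕ) :
    9 * ((n : ℝ) + 1) ^ 2 * ∑ k ∈ Finset.range (n + 1), a k / (((n : ℝ) + 1) - (k : ℝ))
      = (3 * (n : ℝ) + 1) * (3 * (n : ℝ) + 2) * ∑ k ∈ Finset.range n, a k / ((n : ℝ) - (k : ℝ))
        + 9 * (2 * (n : ℝ) + 1) * a n := by
  set f : ℕ → ℝ := fun k => 9 * (k : ℝ) ^ 2 * a k / (((n : ℝ) + 1) - (k : ℝ)) with hf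
  have tel : ∑ k ∈ Finset.range n, (f k - f (k + 1)) = f 0 - f n := Finset.sum_range_sub' f n
  have hterm : ∀ k ∈ Finset.range n,
      9 * ((n : ℝ) + 1) ^ 2 * (a k / (((n : ℝ) + 1) - (k : ℝ)))
        - (3 * (n : ℝ) + 1) * (3 * (n : ℝ) + 2) * (a k / ((n : ℝ) - (k : ℝ)))
      = f k - f (k + 1) := by
    intro k hk
    have hkn : k < n := Finset.mem_range.mp hk
    have hkr : (k : ℝ) < n := by exact_mod_cast hkn
    have h1 : (n : ℝ) - (k : ℝ) ≠ 0 := by linarith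
    have h2 : ((n : ℝ) + 1) - (k : ℝ) ≠ 0 := by linarith
    have hrec := a_rec k
    have h9 : (9 : ℝ) * ((k : ℝ) + 1) ^ 2 ≠ 0 := by positivity
    have ha : a (k + 1) = (3 * (k : ℝ) + 1) * (3 * (k : ℝ) + 2) * a k / (9 * ((k : ℝ) + 1) ^ 2) := by
      field_simp
      linarith [hrec]
    simp only [hf, ha]
    push_cast
    have h3 : (n : ℝ) + 1 - ((k : ℝ) + 1) ≠ 0 := by linarith
    field_simp
    ring
  have sum_eq : 9 * ((n : ℝ) + 1) ^ 2 * ∑ k ∈ Finset.range n, a k / (((n : ℝ) + 1) - (k : ℝ))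
      - (3 * (n : ℝ) + 1) * (3 * (n : ℝ) + 2) * ∑ k ∈ Finset.range n, a k / ((n : ℝ) - (k : ℝ))
      = f 0 - f n := by
    rw [← tel, Finset.mul_sum, Finset.mul_sum, ← Finset.sum_sub_distrib]
    exact Finset.sum_congr rfl hterm
  have hf0 : f 0 = 0 := by simp [hf]
  have hfn : f n = 9 * (n : ℝ) ^ 2 * a n := by
    simp only [hf]
    rw [show ((n : ℝ) + 1) - (n : ℝ) = 1 by ring]
    ring
  rw [Finset.sum_range_succ]
  rw [show ((n : ℝ) + 1) - (n : ℝ) = 1 by ring] at *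
  rw [hf0, hfn] at sum_eq
  rw [mul_add]
  linarith [sum_eq]

lemma key (n : ℕ) : a n * c n = ∑ k ∈ Finset.range n, a k / ((n : ℝ) - (k : ℝ)) := by
  induction n with
  | zero => simp [c, H]
  | succ n ih =>
      have hstar := star n
      rw [← ih] at hstar
      have hrec := a_rec n
      have h9 : (9 : ℝ) * ((n : ℝ) + 1) ^ 2 ≠ 0 := by positivity
      have hgoal : ∑ k ∈ Finset.range (n + 1), a k / ((((n : ℕ) + 1 : ℕ) : ℝ) - (k : ℝ))
          = ∑ k ∈ Finset.range (n + 1), a k / (((n : ℝ) + 1) - (k : ℝ)) := by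
        apply Finset.sum_congr rfl; intro k _; push_cast; ring_nf
      rw [hgoal]
      apply mul_left_cancel₀ h9
      rw [hstar]
      rw [c_rec]
      have ha : a (n + 1) = (3 * (n : ℝ) + 1) * (3 * (n : ℝ) + 2) * a n / (9 * ((n : ℝ) + 1) ^ 2) := by
        field_simp
        linarith [hrec]
      rw [ha]
      have h1 : (3 : ℝ) * n + 1 ≠ 0 := by positivity
      have h2 : (3 : ℝ) * n + 2 ≠ 0 := by positivity
      have h3 : ((n : ℝ) + 1) ≠ 0 := by positivity
      field_simp
      ring


noncomputable def Fc (t : ℂ) (k : ℕ) : ℂ := ((a k : ℝ) : ℂ) * t ^ k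
noncomputable def Gc (t : ℂ) (m : ℕ) : ℂ := t ^ m / (m : ℂ)
noncomputable def hc (t : ℂ) (n : ℕ) : ℂ := ((a n * c n : ℝ) : ℂ) * t ^ n

lemma norm_Fc (t : ℂ) (k : ℕ) : ‖Fc t k‖ = a k * ‖t‖ ^ k := by
  simp only [Fc]
  rw [norm_mul, norm_pow, Complex.norm_real, Real.norm_eq_abs,
    abs_of_pos (a_pos k)]

lemma norm_hc (t : ℂ) (n : ℕ) : ‖hc t n‖ = a n * c n * ‖t‖ ^ n := by
  simp only [hc]
  rw [norm_mul, norm_pow, Complex.norm_real, Real.norm_eq_abs,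
    abs_of_nonneg (mul_nonneg (a_pos n).le (c_nonneg n))]

lemma summable_norm_Fc (t : ℂ) (h : ‖t‖ < 1) : Summable fun k => ‖Fc t k‖ := by
  apply Summable.of_nonneg_of_le (fun k => norm_nonneg _) _
    (summable_geometric_of_lt_one (norm_nonneg t) h)
  intro k
  rw [norm_Fc]
  have h3 : (0 : ℝ) ≤ ‖t‖ ^ k := pow_nonneg (norm_nonneg t) k
  nlinarith [a_le_one k, a_pos k]

lemma summable_norm_Gc (t : ℂ) (h : ‖t‖ < 1) : Summable fun m => ‖Gc t m‖ := by
  apply Summable.of_nonneg_of_le (fun k => norm_nonneg _) _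
    (summable_geometric_of_lt_one (norm_nonneg t) h)
  intro m
  simp only [Gc]
  rcases Nat.eq_zero_or_pos m with rfl | hm
  · simp
  · rw [norm_div, norm_pow, Complex.norm_natCast]
    have h1 : (1 : ℝ) ≤ (m : ℝ) := by exact_mod_cast hm
    have h3 : (0 : ℝ) ≤ ‖t‖ ^ m := pow_nonneg (norm_nonneg t) m
    calc ‖t‖ ^ m / (m : ℝ) ≤ ‖t‖ ^ m / 1 := by
          apply div_le_div_of_nonneg_left h3 (by norm_num) h1
      _ = ‖t‖ ^ m := by ring

lemma inner_eq (t : ℂ) (n : ℕ) :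
    ∑ k ∈ Finset.range (n + 1), Fc t k * Gc t (n - k) = hc t n := by
  rw [Finset.sum_range_succ]
  have hG0 : Gc t (n - n) = 0 := by simp [Gc]
  rw [hG0, mul_zero, add_zero]
  have hstep : ∀ k ∈ Finset.range n,
      Fc t k * Gc t (n - k) = (((a k / ((n : ℝ) - (k : ℝ))) : ℝ) : ℂ) * t ^ n := by
    intro k hk
    have hkn : k < n := Finset.mem_range.mp hk
    have hkr : (k : ℝ) < n := by exact_mod_cast hkn
    have h1 : (((n - k : ℕ)) : ℂ) = (n : ℂ) - (k : ℂ) := by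
      exact_mod_cast Nat.cast_sub hkn.le
    have h2 : t ^ k * t ^ (n - k) = t ^ n := by
      rw [← pow_add]; congr 1; omega
    simp only [Fc, Gc]
    rw [h1]
    push_cast
    rw [← h2]
    have hne : (n : ℂ) - (k : ℂ) ≠ 0 := by
      rw [sub_ne_zero]
      exact_mod_cast hkn.ne'
    field_simp
  rw [Finset.sum_congr rfl hstep, ← Finset.sum_mul]
  simp only [hc]
  rw [key n]
  push_cast
  ring

lemma cauchy (t : ℂ) (h : ‖t‖ < 1) :
    HasSum (hc t) ((∑' k, Fc t k) * (-Complex.log (1 - t))) := by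
  have hnt : ‖t‖ < 1 := by exact h
  have hGsum : HasSum (Gc t) (-Complex.log (1 - t)) :=
    Complex.hasSum_taylorSeries_neg_log hnt
  have hC := hasSum_sum_range_mul_of_summable_norm (summable_norm_Fc t h) (summable_norm_Gc t h)
  rw [hGsum.tsum_eq] at hC
  have : (fun n => ∑ k ∈ Finset.range (n + 1), Fc t k * Gc t (n - k)) = hc t := by
    funext n; exact inner_eq t n
  rwa [this] at hC

lemma harmonic_cmp {f : ℕ → ℝ} (hf : Summable f) (hle : ∀ k : ℕ, 2 / 9 * (1 / ((k : ℝ) + 1)) ≤ f k) :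
    False := by
  have h1 : Summable (fun k : ℕ => 2 / 9 * (1 / ((k : ℝ) + 1))) :=
    Summable.of_nonneg_of_le (fun k => by positivity) hle hf
  have h2 : Summable (fun k : ℕ => 1 / ((k : ℝ) + 1)) := by
    apply (h1.mul_left (9 / 2)).congr
    intro n
    ring
  have h3 : Summable (fun n : ℕ => (fun m : ℕ => 1 / (m : ℝ)) (n + 1)) := by
    apply h2.congr
    intro n
    push_cast
    ring
  exact Real.not_summable_one_div_natCast ((summable_nat_add_iff 1).mp h3)

lemma not_summable_Fc_shift (t : ℂ) (h : ‖t‖ = 1) :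
    ¬ Summable (fun k => Fc t (k + 1)) := by
  intro hs
  apply harmonic_cmp (summable_norm_iff.mpr hs)
  intro k
  rw [norm_Fc, h, one_pow, mul_one]
  have hl := a_lower (k + 1) (by omega)
  have hp : (0 : ℝ) < (k : ℝ) + 1 := by positivity
  push_cast at hl
  rw [show (2:ℝ) / 9 * (1 / ((k:ℝ) + 1)) = (2 / 9) / ((k:ℝ) + 1) by ring, div_le_iff₀ hp]
  nlinarith [a_pos (k + 1)]

lemma not_summable_hc_shift (t : ℂ) (h : ‖t‖ = 1) :
    ¬ Summable (fun k => hc t (k + 1)) := by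
  intro hs
  apply harmonic_cmp (summable_norm_iff.mpr hs)
  intro k
  rw [norm_hc, h, one_pow, mul_one]
  have hl := a_lower (k + 1) (by omega)
  have hcc := c_ge_two (k + 1) (by omega)
  have hp : (0 : ℝ) < (k : ℝ) + 1 := by positivity
  push_cast at hl
  rw [show (2:ℝ) / 9 * (1 / ((k:ℝ) + 1)) = (2 / 9) / ((k:ℝ) + 1) by ring, div_le_iff₀ hp]
  nlinarith [a_pos (k + 1)]


end Stmt1Aux

open Stmt1Aux in
theorem stmt_1 (t : ℂ) (ht : ‖t‖ ≤ 1) (ht1 : t ≠ 1) :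
    ∑' k : ℕ, ((Nat.choose (2 * (k + 1)) (k + 1) : ℂ)) *
        ((Nat.choose (3 * (k + 1)) (k + 1) : ℂ)) * (t / 27) ^ (k + 1) *
        (3 * (H (3 * (k + 1)) : ℂ) - (H (k + 1) : ℂ)) =
      -(∑' k : ℕ, ((Nat.choose (2 * k) k : ℂ)) * ((Nat.choose (3 * k) k : ℂ)) * (t / 27) ^ k) *
        Complex.log (1 - t) := by
  have hterm : ∀ k : ℕ, ((Nat.choose (2 * k) k : ℂ)) * ((Nat.choose (3 * k) k : ℂ)) * (t / 27) ^ k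
      = Fc t k := by
    intro k
    simp only [Fc, a]
    push_cast
    rw [div_pow]
    ring
  have hterm2 : ∀ k : ℕ,
      ((Nat.choose (2 * (k + 1)) (k + 1) : ℂ)) * ((Nat.choose (3 * (k + 1)) (k + 1) : ℂ)) *
        (t / 27) ^ (k + 1) * (3 * (H (3 * (k + 1)) : ℂ) - (H (k + 1) : ℂ)) = hc t (k + 1) := by
    intro k
    simp only [hc, c, a]
    push_cast
    rw [div_pow]
    ring
  rw [tsum_congr hterm2, tsum_congr hterm]
  by_cases hlt : ‖t‖ < 1
  · have hS := cauchy t hlt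
    have hsum := hS.summable
    have h0 : hc t 0 = 0 := by simp [hc, c, H]
    have heq := hsum.tsum_eq_zero_add
    rw [hS.tsum_eq, h0, zero_add] at heq
    rw [← heq]
    ring
  · have habs : ‖t‖ = 1 := le_antisymm ht (not_lt.mp hlt)
    have hnF : ¬ Summable (Fc t) := fun hs =>
      not_summable_Fc_shift t habs ((summable_nat_add_iff 1).mpr hs)
    rw [tsum_eq_zero_of_not_summable (not_summable_hc_shift t habs),
      tsum_eq_zero_of_not_summable hnF]
    ring
end

section
/- Let ν ∈ (−1,0) and let t be a complex number with |t| < 1. Then the function F of a complex variable ε defined by F(ε) = Σ_{k=0}^∞ ((−ν+ε)_k (ν+1+ε)_k / (k!)²) t^k is differentiable at ε = 0, and its derivative there equals −(Σ_{k=0}^∞ ((−ν)_k (ν+1)_k / (k!)²) t^k) · Log(1−t). -/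
open Finset

private lemma ascPoch_prod (x : ℂ) (k : ℕ) :
    (ascPochhammer ℂ k).eval x = ∏ j ∈ Finset.range k, (x + j) := by
  induction k with
  | zero => simp
  | succ n ih => rw [ascPochhammer_succ_eval, ih, Finset.prod_range_succ]

private noncomputable def aA (ν : ℝ) (j : ℕ) (ε : ℂ) : ℂ :=
  (-(ν:ℂ) + ε + j) * ((ν:ℂ) + 1 + ε + j)

private noncomputable def pP (ν : ℝ) (k : ℕ) (ε : ℂ) : ℂ := ∏ j ∈ Finset.range k, aA ν j ε

private noncomputable def cC (ν : ℝ) (k : ℕ) : ℂ := pP ν k 0 / ((k.factorial : ℂ))^2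

private noncomputable def sS (ν : ℝ) (k : ℕ) : ℂ :=
  ∑ j ∈ Finset.range k, (2*(j:ℂ)+1) / aA ν j 0

private lemma aA_ne (ν : ℝ) (h1 : -1 < ν) (h2 : ν < 0) (j : ℕ) : aA ν j 0 ≠ 0 := by
  have hj : (0:ℝ) ≤ j := Nat.cast_nonneg j
  unfold aA
  apply mul_ne_zero
  · have e : (-(ν:ℂ) + 0 + j) = ((-ν + j : ℝ) : ℂ) := by push_cast; ring
    rw [e, Complex.ofReal_ne_zero]
    nlinarith
  · have e : ((ν:ℂ) + 1 + 0 + j) = ((ν + 1 + j : ℝ) : ℂ) := by push_cast; ring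
    rw [e, Complex.ofReal_ne_zero]
    nlinarith

private lemma natc_ne_sub (m k : ℕ) (h : m < k) : ((k:ℂ) - m) ≠ 0 := by
  rw [← Nat.cast_sub h.le]
  exact Nat.cast_ne_zero.2 (Nat.sub_ne_zero_of_lt h)

private lemma cC_succ (ν : ℝ) (k : ℕ) :
    cC ν (k+1) * ((k:ℂ)+1)^2 = cC ν k * aA ν k 0 := by
  have hfac : (k.factorial : ℂ) ≠ 0 := Nat.cast_ne_zero.2 k.factorial_ne_zero
  have hk1 : ((k:ℂ)+1) ≠ 0 := by
    have : (((k+1 : ℕ)):ℂ) ≠ 0 := Nat.cast_ne_zero.2 k.succ_ne_zero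
    push_cast at this; exact this
  have h1 : (((k+1).factorial : ℕ) : ℂ) = ((k:ℂ)+1) * (k.factorial : ℂ) := by
    rw [Nat.factorial_succ]; push_cast; ring
  unfold cC
  rw [pP, Finset.prod_range_succ, ← pP, h1]
  field_simp

private lemma key (ν : ℝ) (h1 : -1 < ν) (h2 : ν < 0) :
    ∀ k : ℕ, cC ν k * sS ν k = ∑ m ∈ Finset.range k, cC ν m / ((k:ℂ) - m) := by
  intro k
  induction k with
  | zero => simp [sS]
  | succ k ih =>
    have hD : ∀ j, aA ν j 0 ≠ 0 := aA_ne ν h1 h2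
    have hk1 : ((k:ℂ)+1) ≠ 0 := by
      have : (((k+1 : ℕ)):ℂ) ≠ 0 := Nat.cast_ne_zero.2 k.succ_ne_zero
      push_cast at this; exact this
    set T : ℕ → ℂ := fun m => (m:ℂ)^2 * cC ν m / ((k:ℂ) + 1 - m) with hT
    have hterm : ∀ m ∈ Finset.range k, T (m+1) - T m
        = aA ν k 0 * (cC ν m / ((k:ℂ) - m))
          - ((k:ℂ)+1)^2 * (cC ν m / ((k:ℂ) + 1 - m)) := by
      intro m hm
      have hmk : m < k := Finset.mem_range.1 hm
      have h3 : ((k:ℂ) - m) ≠ 0 := natc_ne_sub m k hmk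
      have h4 : ((k:ℂ) + 1 - m) ≠ 0 := by
        have := natc_ne_sub m (k+1) (hmk.trans (Nat.lt_succ_self k))
        push_cast at this; exact this
      have h5 : ((m:ℂ)+1) ≠ 0 := by
        have : (((m+1 : ℕ)):ℂ) ≠ 0 := Nat.cast_ne_zero.2 m.succ_ne_zero
        push_cast at this; exact this
      have e1 : cC ν (m+1) = cC ν m * aA ν m 0 / ((m:ℂ)+1)^2 :=
        (eq_div_iff (pow_ne_zero 2 h5)).2 (cC_succ ν m)
      have hT1 : T (m+1) = cC ν m * aA ν m 0 / ((k:ℂ) - m) := by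
        rw [hT]
        simp only []
        push_cast
        rw [e1]
        field_simp
        rw [show (k:ℂ) + 1 - ((m:ℂ) + 1) = (k:ℂ) - m by ring, mul_div_assoc, div_self h3, mul_one]
      rw [hT1, hT]
      simp only []
      simp only [aA]
      field_simp
      ring
    have htel : ∑ m ∈ Finset.range k,
        (aA ν k 0 * (cC ν m / ((k:ℂ) - m))
          - ((k:ℂ)+1)^2 * (cC ν m / ((k:ℂ) + 1 - m)))
        = (k:ℂ)^2 * cC ν k := by
      rw [← Finset.sum_congr rfl hterm, Finset.sum_range_sub T k]
      rw [hT]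
      simp only []
      have hne : (k:ℂ) + 1 - (k:ℂ) = 1 := by ring
      rw [hne]
      simp
    rw [Finset.sum_sub_distrib, ← Finset.mul_sum, ← Finset.mul_sum, ← ih] at htel
    have hgoal2 : (∑ m ∈ Finset.range (k+1), cC ν m / (((k+1:ℕ):ℂ) - m))
        = (∑ m ∈ Finset.range k, cC ν m / ((k:ℂ) + 1 - m)) + cC ν k := by
      rw [Finset.sum_range_succ]
      congr 1
      · apply Finset.sum_congr rfl
        intro m hm
        congr 1
        push_cast
        ring
      · push_cast
        rw [show ((k:ℂ) + 1 - (k:ℂ)) = 1 by ring, div_one]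
    rw [hgoal2]
    have e2 : cC ν (k+1) = cC ν k * aA ν k 0 / ((k:ℂ)+1)^2 :=
      (eq_div_iff (pow_ne_zero 2 hk1)).2 (cC_succ ν k)
    rw [sS, Finset.sum_range_succ, ← sS, e2]
    have haA := hD k
    field_simp
    linear_combination htel

private lemma prod_cast_fact (k : ℕ) :
    ∏ i ∈ Finset.range k, ((i:ℝ)+1) = (k.factorial : ℝ) := by
  rw [← Finset.prod_range_add_one_eq_factorial]
  push_cast
  rfl

private lemma aA0_norm (ν : ℝ) (h1 : -1 < ν) (h2 : ν < 0) (i : ℕ) :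
    ‖aA ν i 0‖ ≤ ((i:ℝ)+1)^2 := by
  have hi : (0:ℝ) ≤ i := Nat.cast_nonneg i
  have e1 : (-(ν:ℂ) + 0 + i) = (((i:ℝ) - ν : ℝ):ℂ) := by push_cast; ring
  have e2 : ((ν:ℂ) + 1 + 0 + i) = ((ν + 1 + (i:ℝ) : ℝ):ℂ) := by push_cast; ring
  rw [aA, norm_mul, e1, e2, Complex.norm_real, Complex.norm_real,
    Real.norm_of_nonneg (by linarith), Real.norm_of_nonneg (by linarith)]
  nlinarith

private lemma cC_norm (ν : ℝ) (h1 : -1 < ν) (h2 : ν < 0) (k : ℕ) : ‖cC ν k‖ ≤ 1 := by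
  have hfa : (0:ℝ) < (k.factorial:ℝ) := by exact_mod_cast k.factorial_pos
  rw [cC, norm_div, norm_pow, Complex.norm_natCast,
    div_le_one (by positivity : (0:ℝ) < ((k.factorial:ℝ))^2)]
  rw [pP, norm_prod]
  calc (∏ i ∈ Finset.range k, ‖aA ν i 0‖)
      ≤ ∏ i ∈ Finset.range k, ((i:ℝ)+1)^2 :=
        Finset.prod_le_prod (fun i _ => norm_nonneg _) (fun i _ => aA0_norm ν h1 h2 i)
    _ = ((k.factorial:ℝ))^2 := by rw [Finset.prod_pow, prod_cast_fact]

theorem stmt_5 (ν : ℝ) (hν : ν ∈ Set.Ioo (-1 : ℝ) 0) (t : ℂ) (ht : ‖t‖ < 1) :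
    HasDerivAt
      (fun ε : ℂ => ∑' k : ℕ,
        ((ascPochhammer ℂ k).eval (-(ν : ℂ) + ε) * (ascPochhammer ℂ k).eval ((ν : ℂ) + 1 + ε) /
          ((Nat.factorial k : ℂ)) ^ 2) * t ^ k)
      (-(∑' k : ℕ,
        ((ascPochhammer ℂ k).eval (-(ν : ℂ)) * (ascPochhammer ℂ k).eval ((ν : ℂ) + 1) /
          ((Nat.factorial k : ℂ)) ^ 2) * t ^ k) * Complex.log (1 - t))
      0 := by
  obtain ⟨h1, h2⟩ := hν
  have hT : ‖t‖ < 1 := ht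
  have ht0 : (0:ℝ) ≤ ‖t‖ := norm_nonneg t
  set δ : ℝ := (1 - ‖t‖)/4 with hδdef
  have hδ0 : 0 < δ := by rw [hδdef]; linarith
  have hδh : δ ≤ 1/2 := by rw [hδdef]; linarith
  set q : ℝ := (1+δ)^2 * ‖t‖ with hqdef
  have hq0 : 0 ≤ q := by positivity
  have hq1 : q < 1 := by
    rw [hqdef, hδdef]
    nlinarith [mul_pos (show (0:ℝ) < 1 - ‖t‖ by linarith)
      (show (0:ℝ) < ‖t‖^2 - 9*‖t‖ + 16 by nlinarith)]
  have hD := aA_ne ν h1 h2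
  -- rewrite statement in terms of pP / cC
  have hfun : ∀ (x : ℂ) (k : ℕ),
      ((ascPochhammer ℂ k).eval (-(ν:ℂ) + x) * (ascPochhammer ℂ k).eval ((ν:ℂ)+1+x) /
        ((Nat.factorial k : ℂ))^2) * t^k = pP ν k x / ((Nat.factorial k : ℂ))^2 * t^k := by
    intro x k
    rw [ascPoch_prod, ascPoch_prod, pP, ← Finset.prod_mul_distrib]
    rfl
  have hfun0 : ∀ k : ℕ,
      ((ascPochhammer ℂ k).eval (-(ν:ℂ)) * (ascPochhammer ℂ k).eval ((ν:ℂ)+1) /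
        ((Nat.factorial k : ℂ))^2) * t^k = cC ν k * t^k := by
    intro k
    rw [ascPoch_prod, ascPoch_prod, ← Finset.prod_mul_distrib, cC, pP]
    congr 2
    exact Finset.prod_congr rfl fun j _ => by simp [aA]
  simp only [hfun, hfun0]
  -- derivative of each term
  have hA : ∀ (j : ℕ) (ε : ℂ), HasDerivAt (fun x => aA ν j x) (2*ε + 2*(j:ℂ) + 1) ε := by
    intro j ε
    have ha : HasDerivAt (fun x : ℂ => -(ν:ℂ) + x + (j:ℂ)) 1 ε := by
      simpa using ((hasDerivAt_id ε).const_add (-(ν:ℂ))).add_const (j:ℂ)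
    have hb : HasDerivAt (fun x : ℂ => (ν:ℂ) + 1 + x + (j:ℂ)) 1 ε := by
      simpa using ((hasDerivAt_id ε).const_add ((ν:ℂ)+1)).add_const (j:ℂ)
    have hm := ha.mul hb
    simp only [aA]
    refine hm.congr_deriv ?_
    ring
  have hgd : ∀ (k : ℕ) (ε : ℂ),
      HasDerivAt (fun x => pP ν k x / ((Nat.factorial k:ℂ))^2 * t^k)
      ((∑ j ∈ Finset.range k, (∏ i ∈ (Finset.range k).erase j, aA ν i ε) * (2*ε + 2*(j:ℂ) + 1))
        / ((Nat.factorial k:ℂ))^2 * t^k) ε := by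
    intro k ε
    have hp : HasDerivAt (fun x => pP ν k x)
        (∑ j ∈ Finset.range k,
          (∏ i ∈ (Finset.range k).erase j, aA ν i ε) * (2*ε + 2*(j:ℂ) + 1)) ε := by
      have := HasDerivAt.fun_finsetProd (u := Finset.range k) (f := fun j x => aA ν j x)
        (f' := fun j => 2*ε + 2*(j:ℂ) + 1) (x := ε) (fun j _ => hA j ε)
      simpa [smul_eq_mul, pP] using this
    exact (hp.div_const _).mul_const _
  -- summable bound
  have hqn : ‖q‖ < 1 := by rwa [Real.norm_eq_abs, abs_of_nonneg hq0]
  have husum : Summable (fun k : ℕ => 2*((k:ℝ)+1)^2 * q^k) := by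
    have s2 := summable_pow_mul_geometric_of_norm_lt_one 2 hqn
    have s1 := summable_pow_mul_geometric_of_norm_lt_one 1 hqn
    have s0 := summable_geometric_of_norm_lt_one hqn
    have hs := (s2.mul_left 2).add ((s1.mul_left 4).add (s0.mul_left 2))
    apply hs.congr
    intro n
    ring
  -- the uniform bound on the ball
  have hbound : ∀ (k : ℕ) (ε : ℂ), ε ∈ Metric.ball (0:ℂ) δ →
      ‖(∑ j ∈ Finset.range k, (∏ i ∈ (Finset.range k).erase j, aA ν i ε) * (2*ε + 2*(j:ℂ) + 1))
        / ((Nat.factorial k:ℂ))^2 * t^k‖ ≤ 2*((k:ℝ)+1)^2 * q^k := by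
    intro k ε hε
    rw [Metric.mem_ball, dist_zero_right] at hε
    have hεδ : ‖ε‖ ≤ δ := hε.le
    have hfa : (0:ℝ) < (k.factorial:ℝ) := by exact_mod_cast k.factorial_pos
    have hAb : ∀ i : ℕ, ‖aA ν i ε‖ ≤ (1+δ)^2 * ((i:ℝ)+1)^2 := by
      intro i
      have hi0 : (0:ℝ) ≤ i := Nat.cast_nonneg i
      have e1 : ‖-(ν:ℂ) + ε + i‖ ≤ (1+δ)*((i:ℝ)+1) := by
        have e : -(ν:ℂ) + ε + i = (((i:ℝ) - ν : ℝ):ℂ) + ε := by push_cast; ring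
        rw [e]
        refine (norm_add_le _ _).trans ?_
        rw [Complex.norm_real, Real.norm_of_nonneg (by linarith)]
        nlinarith
      have e2 : ‖(ν:ℂ) + 1 + ε + i‖ ≤ (1+δ)*((i:ℝ)+1) := by
        have e : (ν:ℂ) + 1 + ε + i = ((ν + 1 + (i:ℝ) : ℝ):ℂ) + ε := by push_cast; ring
        rw [e]
        refine (norm_add_le _ _).trans ?_
        rw [Complex.norm_real, Real.norm_of_nonneg (by linarith)]
        nlinarith
      calc ‖aA ν i ε‖ = ‖-(ν:ℂ) + ε + i‖ * ‖(ν:ℂ)+1+ε+i‖ := by rw [aA, norm_mul]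
        _ ≤ ((1+δ)*((i:ℝ)+1)) * ((1+δ)*((i:ℝ)+1)) :=
            mul_le_mul e1 e2 (norm_nonneg _) (by positivity)
        _ = (1+δ)^2*((i:ℝ)+1)^2 := by ring
    have hProdb : ∀ j ∈ Finset.range k,
        ‖∏ i ∈ (Finset.range k).erase j, aA ν i ε‖
          ≤ ((1+δ)^2)^k * ((k.factorial:ℝ))^2 := by
      intro j hj
      rw [norm_prod]
      calc (∏ i ∈ (Finset.range k).erase j, ‖aA ν i ε‖)
          ≤ ∏ i ∈ (Finset.range k).erase j, ((1+δ)^2*((i:ℝ)+1)^2) :=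
            Finset.prod_le_prod (fun i _ => norm_nonneg _) (fun i _ => hAb i)
        _ ≤ ∏ i ∈ Finset.range k, ((1+δ)^2*((i:ℝ)+1)^2) := by
            have hfj : (1:ℝ) ≤ (1+δ)^2*((j:ℝ)+1)^2 := by
              have ha : (1:ℝ) ≤ (1+δ)^2 := by nlinarith
              have hb : (1:ℝ) ≤ ((j:ℝ)+1)^2 := by nlinarith [Nat.cast_nonneg (α := ℝ) j]
              nlinarith
            have hpe := Finset.prod_erase_mul (Finset.range k)
              (fun i => (1+δ)^2*((i:ℝ)+1)^2) hj
            have hnn : (0:ℝ) ≤ ∏ i ∈ (Finset.range k).erase j, ((1+δ)^2*((i:ℝ)+1)^2) := by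
              apply Finset.prod_nonneg
              intro i _
              positivity
            calc (∏ i ∈ (Finset.range k).erase j, ((1+δ)^2*((i:ℝ)+1)^2))
                ≤ (∏ i ∈ (Finset.range k).erase j, ((1+δ)^2*((i:ℝ)+1)^2))
                    * ((1+δ)^2*((j:ℝ)+1)^2) := le_mul_of_one_le_right hnn hfj
              _ = ∏ i ∈ Finset.range k, ((1+δ)^2*((i:ℝ)+1)^2) := hpe
        _ = ((1+δ)^2)^k * ((k.factorial:ℝ))^2 := by
            rw [Finset.prod_mul_distrib, Finset.prod_const, Finset.card_range,
              Finset.prod_pow, prod_cast_fact]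
    have hlin : ∀ j ∈ Finset.range k, ‖2*ε+2*(j:ℂ)+1‖ ≤ 2*(k:ℝ) := by
      intro j hj
      have hjk : j < k := Finset.mem_range.1 hj
      have hjk' : (j:ℝ)+1 ≤ (k:ℝ) := by exact_mod_cast hjk
      have e : (2:ℂ)*ε+2*(j:ℂ)+1 = ((2*(j:ℝ)+1 : ℝ):ℂ) + 2*ε := by push_cast; ring
      rw [e]
      refine (norm_add_le _ _).trans ?_
      have h2e : ‖(2:ℂ)*ε‖ = 2*‖ε‖ := by rw [norm_mul]; norm_num
      rw [Complex.norm_real, Real.norm_of_nonneg (by positivity), h2e]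
      linarith
    have hsum : ‖∑ j ∈ Finset.range k,
        (∏ i ∈ (Finset.range k).erase j, aA ν i ε) * (2*ε + 2*(j:ℂ) + 1)‖
        ≤ (k:ℝ) * (((1+δ)^2)^k * ((k.factorial:ℝ))^2 * (2*(k:ℝ))) := by
      refine (norm_sum_le _ _).trans ?_
      calc (∑ j ∈ Finset.range k, ‖(∏ i ∈ (Finset.range k).erase j, aA ν i ε) * (2*ε + 2*(j:ℂ) + 1)‖)
          ≤ ∑ _j ∈ Finset.range k, ((1+δ)^2)^k * ((k.factorial:ℝ))^2 * (2*(k:ℝ)) := by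
            apply Finset.sum_le_sum
            intro j hj
            rw [norm_mul]
            exact mul_le_mul (hProdb j hj) (hlin j hj) (norm_nonneg _) (by positivity)
        _ = (k:ℝ) * (((1+δ)^2)^k * ((k.factorial:ℝ))^2 * (2*(k:ℝ))) := by
            rw [Finset.sum_const, Finset.card_range, nsmul_eq_mul]
    calc ‖(∑ j ∈ Finset.range k, (∏ i ∈ (Finset.range k).erase j, aA ν i ε) * (2*ε + 2*(j:ℂ) + 1))
        / ((Nat.factorial k:ℂ))^2 * t^k‖
        = ‖∑ j ∈ Finset.range k,
            (∏ i ∈ (Finset.range k).erase j, aA ν i ε) * (2*ε + 2*(j:ℂ) + 1)‖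
            / ((k.factorial:ℝ))^2 * ‖t‖^k := by
          rw [norm_mul, norm_div, norm_pow, norm_pow, Complex.norm_natCast]
      _ ≤ ((k:ℝ) * (((1+δ)^2)^k * ((k.factorial:ℝ))^2 * (2*(k:ℝ))))
            / ((k.factorial:ℝ))^2 * ‖t‖^k := by gcongr
      _ = 2*(k:ℝ)^2 * q^k := by
          rw [hqdef, mul_pow]
          field_simp
      _ ≤ 2*((k:ℝ)+1)^2 * q^k := by
          have hk0 : (0:ℝ) ≤ k := Nat.cast_nonneg k
          nlinarith [pow_nonneg hq0 k]
  -- summability at the center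
  have hg0 : Summable (fun k : ℕ => pP ν k 0 / ((Nat.factorial k:ℂ))^2 * t^k) := by
    apply Summable.of_norm
    apply Summable.of_nonneg_of_le (fun k => norm_nonneg _) _
      (summable_geometric_of_lt_one ht0 hT)
    intro k
    rw [norm_mul, norm_pow]
    calc ‖pP ν k 0 / ((Nat.factorial k:ℂ))^2‖ * ‖t‖^k
        ≤ 1 * ‖t‖^k := by
          apply mul_le_mul_of_nonneg_right _ (by positivity)
          exact cC_norm ν h1 h2 k
      _ = ‖t‖^k := one_mul _
  -- the main derivative statement
  have HD := hasDerivAt_tsum_of_isPreconnected husum Metric.isOpen_ball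
    ((convex_ball (0:ℂ) δ).isPreconnected) (fun k ε _ => hgd k ε) hbound
    (Metric.mem_ball_self hδ0) hg0 (Metric.mem_ball_self hδ0)
  refine HD.congr_deriv ?_
  -- identify the derivative value
  have hlog : (∑' n : ℕ, t^n/(n:ℂ)) = -Complex.log (1-t) :=
    (Complex.hasSum_taylorSeries_neg_log hT).tsum_eq
  have hs1 : Summable (fun k : ℕ => ‖cC ν k * t^k‖) := by
    apply Summable.of_nonneg_of_le (fun k => norm_nonneg _) _
      (summable_geometric_of_lt_one ht0 hT)
    intro k
    rw [norm_mul, norm_pow]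
    calc ‖cC ν k‖ * ‖t‖^k ≤ 1 * ‖t‖^k :=
          mul_le_mul_of_nonneg_right (cC_norm ν h1 h2 k) (by positivity)
      _ = ‖t‖^k := one_mul _
  have hs2 : Summable (fun n : ℕ => ‖t^n/(n:ℂ)‖) := by
    apply Summable.of_nonneg_of_le (fun k => norm_nonneg _) _
      (summable_geometric_of_lt_one ht0 hT)
    intro n
    rw [norm_div, norm_pow, Complex.norm_natCast]
    cases n with
    | zero => simp
    | succ m =>
        apply div_le_self (by positivity)
        exact_mod_cast Nat.one_le_iff_ne_zero.2 m.succ_ne_zero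
  have hC := tsum_mul_tsum_eq_tsum_sum_antidiagonal_of_summable_norm hs1 hs2
  have hderiv0 : ∀ k : ℕ,
      (∑ j ∈ Finset.range k, (∏ i ∈ (Finset.range k).erase j, aA ν i 0)
          * (2*(0:ℂ) + 2*(j:ℂ) + 1)) / ((Nat.factorial k:ℂ))^2 * t^k
        = cC ν k * sS ν k * t^k := by
    intro k
    have hterm : ∀ j ∈ Finset.range k,
        (∏ i ∈ (Finset.range k).erase j, aA ν i 0) * (2*(0:ℂ)+2*(j:ℂ)+1)
          = pP ν k 0 * ((2*(j:ℂ)+1) / aA ν j 0) := by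
      intro j hj
      have hp : (∏ i ∈ (Finset.range k).erase j, aA ν i 0) * aA ν j 0 = pP ν k 0 :=
        Finset.prod_erase_mul _ _ hj
      have he : (∏ i ∈ (Finset.range k).erase j, aA ν i 0) = pP ν k 0 / aA ν j 0 :=
        (eq_div_iff (hD j)).2 hp
      rw [he]
      have := hD j
      field_simp
      ring
    rw [Finset.sum_congr rfl hterm, ← Finset.mul_sum, ← sS, cC]
    ring
  have hmain : (∑' k : ℕ, cC ν k * sS ν k * t^k)
      = (∑' k : ℕ, cC ν k * t^k) * (∑' n : ℕ, t^n/(n:ℂ)) := by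
    rw [hC]
    apply tsum_congr
    intro n
    rw [Finset.Nat.sum_antidiagonal_eq_sum_range_succ
      (fun i j => cC ν i * t^i * (t^j/(j:ℂ))) n]
    rw [Finset.sum_range_succ]
    simp only [Nat.sub_self, Nat.cast_zero, div_zero, mul_zero, add_zero]
    rw [key ν h1 h2 n, Finset.sum_mul]
    apply Finset.sum_congr rfl
    intro i hi
    have hin : i < n := Finset.mem_range.1 hi
    rw [Nat.cast_sub hin.le]
    symm
    calc cC ν i * t^i * (t^(n-i)/((n:ℂ)-(i:ℂ)))
        = cC ν i / ((n:ℂ)-(i:ℂ)) * (t^i * t^(n-i)) := by ring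
      _ = cC ν i / ((n:ℂ)-(i:ℂ)) * t^n := by
          rw [← pow_add, Nat.add_sub_cancel' hin.le]
  rw [tsum_congr hderiv0, hmain, hlog]
  ring
end

section
/- One has 4·Σ_{k=0}^∞ (C(2k,k)/4^k) · (2H_{2k} − H_k)/(2k+1) = 4π·log 2. -/
open Real Set MeasureTheory intervalIntegral

namespace Stmt7

noncomputable def c (k : ℕ) : ℝ := (Nat.choose (2 * k) k : ℝ) / 4 ^ k
noncomputable def a (k : ℕ) : ℝ := c k * (2 * H (2 * k) - H k)

lemma H_succ (n : ℕ) : H (n + 1) = H n + 1 / (n + 1) := by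
  simp [H, Finset.sum_range_succ]

lemma H_nonneg (n : ℕ) : 0 ≤ H n := by
  apply Finset.sum_nonneg; intro i _; positivity

lemma H_mono : Monotone H := by
  apply monotone_nat_of_le_succ
  intro n; rw [H_succ]
  have : 0 < 1 / ((n:ℝ) + 1) := by positivity
  linarith

lemma H_le (n : ℕ) : H n ≤ n := by
  induction n with
  | zero => simp [H]
  | succ n ih =>
    rw [H_succ]
    push_cast
    have : (1:ℝ) / (n + 1) ≤ 1 := by
      rw [div_le_one (by positivity)]; linarith [Nat.cast_nonneg (α := ℝ) n]
    linarith

lemma c_pos (k : ℕ) : 0 < c k := by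
  have := Nat.choose_pos (show k ≤ 2 * k by omega)
  unfold c; positivity

lemma c_succ (k : ℕ) : c (k + 1) = c k * (2 * k + 1) / (2 * k + 2) := by
  have h := Nat.succ_mul_centralBinom_succ k
  have h2 : ((k:ℕ) + 1 : ℕ) * (2 * (k + 1)).choose (k + 1) = 2 * (2 * k + 1) * ((2 * k).choose k) := by
    simpa [Nat.centralBinom] using h
  have h3 : ((k:ℝ) + 1) * ((2 * (k + 1)).choose (k + 1) : ℝ) = 2 * (2 * k + 1) * ((2 * k).choose k : ℝ) := by
    exact_mod_cast congrArg (Nat.cast : ℕ → ℝ) h2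
  unfold c
  have hk : ((k:ℝ) + 1) ≠ 0 := by positivity
  field_simp [pow_succ]
  linear_combination (4:ℝ) ^ k * 2 * h3

lemma c_le_one (k : ℕ) : c k ≤ 1 := by
  induction k with
  | zero => simp [c]
  | succ k ih =>
    rw [c_succ]
    have h1 : c k * (2 * k + 1) / (2 * k + 2) ≤ c k := by
      rw [div_le_iff₀ (by positivity)]
      nlinarith [c_pos k]
    linarith

lemma a_nonneg (k : ℕ) : 0 ≤ a k := by
  have h1 : H k ≤ H (2 * k) := H_mono (by omega)
  have := H_nonneg (2 * k)
  have := c_pos k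
  unfold a; nlinarith

lemma a_le (k : ℕ) : a k ≤ 4 * (k + 1) := by
  have hnn : 0 ≤ 2 * H (2 * k) - H k := by
    have h1 : H k ≤ H (2 * k) := H_mono (by omega)
    have := H_nonneg (2 * k); linarith
  have hub : 2 * H (2 * k) - H k ≤ 4 * (k:ℝ) + 4 := by
    have := H_le (2 * k)
    have := H_nonneg k
    push_cast at *
    linarith
  have : a k ≤ 2 * H (2 * k) - H k :=
    mul_le_of_le_one_left hnn (c_le_one k)
  linarith

lemma a_succ (k : ℕ) : (2 * (k:ℝ) + 2) * a (k + 1) = (2 * k + 1) * a k + 2 * c k := by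
  have hh : 2 * H (2 * (k + 1)) - H (k + 1) = (2 * H (2 * k) - H k) + 2 / (2 * (k:ℝ) + 1) := by
    have e1 : 2 * (k + 1) = (2 * k + 1) + 1 := by ring
    rw [e1, H_succ, H_succ, H_succ]
    push_cast
    field_simp
    ring
  unfold a
  rw [hh, c_succ]
  field_simp


-- summability of (k+1)*k*r^(k-1) for 0 ≤ r < 1
lemma summable_aux {r : ℝ} (hr0 : 0 ≤ r) (hr1 : r < 1) :
    Summable (fun k : ℕ => ((k:ℝ) + 1) * k * r ^ (k - 1)) := by
  rw [← summable_nat_add_iff 1]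
  have h1 : Summable (fun k : ℕ => ((k:ℝ))^2 * r ^ k) := by
    simpa using summable_pow_mul_geometric_of_norm_lt_one (R := ℝ) 2
      (r := r) (by rwa [Real.norm_eq_abs, abs_of_nonneg hr0])
  have h2 : Summable (fun k : ℕ => ((k:ℝ)) * r ^ k) := by
    simpa using summable_pow_mul_geometric_of_norm_lt_one (R := ℝ) 1
      (r := r) (by rwa [Real.norm_eq_abs, abs_of_nonneg hr0])
  have h3 : Summable (fun k : ℕ => r ^ k) :=
    summable_geometric_of_lt_one hr0 hr1
  have : Summable (fun k : ℕ => ((k:ℝ))^2 * r ^ k + 3 * ((k:ℝ) * r ^ k) + 2 * r ^ k) :=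
    (h1.add (h2.mul_left 3)).add (h3.mul_left 2)
  apply this.congr
  intro k
  push_cast
  ring

lemma summable_pow_coeff {b : ℕ → ℝ} (hb : ∀ k, |b k| ≤ 4 * (k + 1)) {x : ℝ}
    (hx : |x| < 1) : Summable (fun k => b k * x ^ k) := by
  have h1 : Summable (fun k : ℕ => 4 * (((k:ℝ) + 1) * |x| ^ k)) := by
    apply Summable.mul_left
    have h2 : Summable (fun k : ℕ => ((k:ℝ)) * |x| ^ k) := by
      simpa using summable_pow_mul_geometric_of_norm_lt_one (R := ℝ) 1
        (r := |x|) (by rwa [Real.norm_eq_abs, abs_abs])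
    have h3 : Summable (fun k : ℕ => |x| ^ k) :=
      summable_geometric_of_lt_one (abs_nonneg x) hx
    apply (h2.add h3).congr
    intro k; ring
  apply Summable.of_norm_bounded h1
  intro k
  rw [norm_mul, norm_pow, Real.norm_eq_abs, Real.norm_eq_abs]
  calc |b k| * |x| ^ k ≤ (4 * (k + 1)) * |x| ^ k := by
        apply mul_le_mul_of_nonneg_right (hb k) (by positivity)
    _ = 4 * (((k:ℝ) + 1) * |x| ^ k) := by ring

lemma summable_der_coeff {b : ℕ → ℝ} (hb : ∀ k, |b k| ≤ 4 * (k + 1)) {x r : ℝ}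
    (hr1 : r < 1) (hx : |x| ≤ r) : Summable (fun k : ℕ => b k * (k * x ^ (k - 1))) := by
  have hr0 : 0 ≤ r := le_trans (abs_nonneg x) hx
  apply Summable.of_norm_bounded (((summable_aux hr0 hr1).mul_left 4))
  intro k
  simp only [Real.norm_eq_abs, abs_mul, abs_pow, Nat.abs_cast]
  calc |b k| * ((k:ℝ) * |x| ^ (k - 1)) ≤ (4 * (k + 1)) * ((k:ℝ) * r ^ (k - 1)) := by
        apply mul_le_mul (hb k) _ (by positivity) (by positivity)
        apply mul_le_mul_of_nonneg_left _ (Nat.cast_nonneg k)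
        exact pow_le_pow_left₀ (abs_nonneg x) hx _
    _ = 4 * (((k:ℝ) + 1) * k * r ^ (k - 1)) := by ring

lemma hasDerivAt_tsum_pow {b : ℕ → ℝ} (hb : ∀ k, |b k| ≤ 4 * (k + 1)) {x : ℝ}
    (hx : |x| < 1) :
    HasDerivAt (fun y => ∑' k, b k * y ^ k) (∑' k : ℕ, b k * (k * x ^ (k - 1))) x := by
  set r : ℝ := (|x| + 1) / 2 with hr
  have hxr : |x| < r := by rw [hr]; linarith
  have hr0 : 0 < r := lt_of_le_of_lt (abs_nonneg x) hxr
  have hr1 : r < 1 := by rw [hr]; linarith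
  apply hasDerivAt_tsum_of_isPreconnected
    (u := fun k : ℕ => 4 * (((k:ℝ) + 1) * k * r ^ (k - 1)))
    (t := Ioo (-r) r) (y₀ := 0)
    (g := fun (k : ℕ) (y : ℝ) => b k * y ^ k)
    (g' := fun (k : ℕ) (y : ℝ) => b k * ((k : ℝ) * y ^ (k - 1)))
  · exact (summable_aux hr0.le hr1).mul_left 4
  · exact isOpen_Ioo
  · exact (convex_Ioo _ _).isPreconnected
  · intro n y _
    simpa using (hasDerivAt_pow n y).const_mul (b n)
  · intro n y hy
    have hyr : |y| ≤ r := by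
      rw [abs_le]; exact ⟨hy.1.le, hy.2.le⟩
    simp only [Real.norm_eq_abs, abs_mul, abs_pow, Nat.abs_cast]
    calc |b n| * ((n:ℝ) * |y| ^ (n - 1)) ≤ (4 * (n + 1)) * ((n:ℝ) * r ^ (n - 1)) := by
          apply mul_le_mul (hb n) _ (by positivity) (by positivity)
          apply mul_le_mul_of_nonneg_left _ (Nat.cast_nonneg n)
          exact pow_le_pow_left₀ (abs_nonneg y) hyr _
      _ = 4 * (((n:ℝ) + 1) * n * r ^ (n - 1)) := by ring
  · exact ⟨by linarith, hr0⟩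
  · apply summable_of_ne_finset_zero (s := {0})
    intro k hk
    simp only [Finset.mem_singleton] at hk
    simp [zero_pow hk]
  · exact ⟨by linarith [abs_lt.1 hxr |>.1], (abs_lt.1 hxr).2⟩

-- The key tsum manipulation: 2(1-x) * D - S = ∑ (2(k+1)b(k+1) - (2k+1)b k) x^k
lemma ode_combination {b : ℕ → ℝ} (hb : ∀ k, |b k| ≤ 4 * (k + 1)) {x : ℝ} (hx : |x| < 1) :
    2 * (1 - x) * (∑' k : ℕ, b k * (k * x ^ (k - 1))) - (∑' k, b k * x ^ k)
      = ∑' k : ℕ, (2 * (k + 1) * b (k + 1) - (2 * k + 1) * b k) * x ^ k := by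
  have hD : Summable (fun k : ℕ => b k * (k * x ^ (k - 1))) :=
    summable_der_coeff hb hx le_rfl
  have hS : Summable (fun k => b k * x ^ k) := summable_pow_coeff hb hx
  -- shift: ∑ b k * (k x^{k-1}) = ∑ b(k+1) (k+1) x^k
  have hshift : (∑' k : ℕ, b k * (k * x ^ (k - 1)))
      = ∑' k : ℕ, b (k + 1) * ((k + 1) * x ^ k) := by
    rw [Summable.tsum_eq_zero_add hD]
    simp
  -- ∑ b k * (k x^{k-1}) * x = ∑ k b k x^k termwise
  have hmul : ∀ k : ℕ, b k * (k * x ^ (k - 1)) * x = (k:ℝ) * b k * x ^ k := by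
    intro k
    cases k with
    | zero => simp
    | succ n => simp [pow_succ]; ring
  have hSder1 : Summable (fun k : ℕ => b (k + 1) * ((k + 1 : ℝ) * x ^ k)) := by
    rw [Summable.tsum_eq_zero_add hD] at *
    have := (summable_nat_add_iff 1).2 hD
    apply this.congr
    intro k; simp
  have hSmul : Summable (fun k : ℕ => (k:ℝ) * b k * x ^ k) := by
    apply (hD.mul_right x).congr
    intro k; rw [hmul k]
  calc 2 * (1 - x) * (∑' k : ℕ, b k * (k * x ^ (k - 1))) - (∑' k, b k * x ^ k)
      = 2 * (∑' k : ℕ, b (k+1) * ((k + 1) * x ^ k)) - 2 * ((∑' k : ℕ, b k * (k * x ^ (k-1))) * x)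
          - (∑' k, b k * x ^ k) := by rw [← hshift]; ring
    _ = (∑' k : ℕ, 2 * (b (k+1) * ((k + 1) * x ^ k))) - (∑' k : ℕ, 2 * ((k:ℝ) * b k * x ^ k))
          - (∑' k, b k * x ^ k) := by
        have e1 : (2:ℝ) * (∑' k : ℕ, b (k+1) * ((k+1:ℝ) * x ^ k))
            = ∑' k : ℕ, 2 * (b (k+1) * ((k+1:ℝ) * x ^ k)) := tsum_mul_left.symm
        have e2 : (2:ℝ) * ((∑' k : ℕ, b k * ((k:ℝ) * x ^ (k-1))) * x)
            = ∑' k : ℕ, 2 * ((k:ℝ) * b k * x ^ k) := by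
          rw [← tsum_mul_right, ← tsum_mul_left]
          exact tsum_congr fun k => by rw [← hmul k]
        rw [e1, e2]
    _ = ∑' k : ℕ, (2 * (k + 1) * b (k + 1) - (2 * k + 1) * b k) * x ^ k := by
        rw [← Summable.tsum_sub (hSder1.mul_left 2) (hSmul.mul_left 2),
            ← Summable.tsum_sub (((hSder1.mul_left 2).sub (hSmul.mul_left 2))) hS]
        apply tsum_congr
        intro k
        ring

noncomputable def f (x : ℝ) : ℝ := ∑' k, c k * x ^ k
noncomputable def g (x : ℝ) : ℝ := ∑' k, a k * x ^ k

lemma abs_c_le (k : ℕ) : |c k| ≤ 4 * (k + 1) := by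
  rw [abs_of_pos (c_pos k)]
  have := c_le_one k
  have : (0:ℝ) ≤ (k:ℝ) := Nat.cast_nonneg k
  linarith [c_le_one k]

lemma abs_a_le (k : ℕ) : |a k| ≤ 4 * (k + 1) := by
  rw [abs_of_nonneg (a_nonneg k)]; exact a_le k

lemma c_zero : c 0 = 1 := by simp [c]

lemma f_zero : f 0 = 1 := by
  unfold f
  rw [tsum_eq_single 0 (fun k hk => by simp [zero_pow hk])]
  simp [c_zero]

lemma g_zero : g 0 = 0 := by
  unfold g
  rw [tsum_eq_single 0 (fun k hk => by simp [zero_pow hk])]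
  simp [a, H]

lemma f_ode {x : ℝ} (hx : |x| < 1) :
    2 * (1 - x) * (∑' k : ℕ, c k * (k * x ^ (k - 1))) - f x = 0 := by
  rw [show f x = ∑' k, c k * x ^ k from rfl, ode_combination abs_c_le hx]
  have : ∀ k : ℕ, (2 * ((k:ℝ) + 1) * c (k + 1) - (2 * k + 1) * c k) * x ^ k = 0 := by
    intro k
    have h := c_succ k
    have hk : (2 * (k:ℝ) + 2) ≠ 0 := by positivity
    have : 2 * ((k:ℝ) + 1) * c (k + 1) = (2 * k + 1) * c k := by
      rw [h]; field_simp
    rw [this]; ring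
  simp only [this, tsum_zero]

lemma g_ode {x : ℝ} (hx : |x| < 1) :
    2 * (1 - x) * (∑' k : ℕ, a k * (k * x ^ (k - 1))) - g x = 2 * f x := by
  rw [show g x = ∑' k, a k * x ^ k from rfl, ode_combination abs_a_le hx]
  have hterm : ∀ k : ℕ, (2 * ((k:ℝ) + 1) * a (k + 1) - (2 * k + 1) * a k) * x ^ k
      = 2 * (c k * x ^ k) := by
    intro k
    have h := a_succ k
    have : 2 * ((k:ℝ) + 1) * a (k + 1) - (2 * k + 1) * a k = 2 * c k := by linarith
    rw [this]; ring
  rw [tsum_congr hterm, tsum_mul_left]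
  rfl

lemma abs_lt_one_of_Icc {x y : ℝ} (hy : y ∈ Icc 0 x) (hx : x < 1) : |y| < 1 := by
  rw [abs_lt]; constructor <;> [linarith [hy.1]; linarith [hy.2]]

lemma f_sq {x : ℝ} (hx : x ∈ Ico (0:ℝ) 1) : f x * f x * (1 - x) = 1 := by
  obtain ⟨hx0, hx1⟩ := hx
  have key : ∀ y ∈ Icc (0:ℝ) x, HasDerivAt (fun z => f z * f z * (1 - z)) 0 y := by
    intro y hy
    have hylt : |y| < 1 := abs_lt_one_of_Icc hy hx1
    have hdf := hasDerivAt_tsum_pow abs_c_le hylt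
    have hdf' : HasDerivAt f (∑' k : ℕ, c k * (k * y ^ (k - 1))) y := hdf
    set D := ∑' k : ℕ, c k * (k * y ^ (k - 1)) with hD
    have h1 : HasDerivAt (fun z => f z * f z) (D * f y + f y * D) y := hdf'.mul hdf'
    have h2 : HasDerivAt (fun z => (1:ℝ) - z) (-1) y := (hasDerivAt_id y).const_sub 1
    have hF := h1.mul h2
    have hode := f_ode hylt
    have hzero : (D * f y + f y * D) * (1 - y) + f y * f y * (-1) = 0 := by
      rw [← hD] at hode; linear_combination (f y) * hode
    rw [hzero] at hF
    exact hF
  have hcont : ContinuousOn (fun z => f z * f z * (1 - z)) (Icc 0 x) := fun y hy =>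
    ((key y hy).continuousAt).continuousWithinAt
  have := constant_of_has_deriv_right_zero hcont
    (fun y hy => ((key y (Ico_subset_Icc_self hy)).hasDerivWithinAt)) x
    (right_mem_Icc.2 hx0)
  rw [this]
  rw [f_zero]; ring

lemma one_le_f {x : ℝ} (hx : x ∈ Ico (0:ℝ) 1) : 1 ≤ f x := by
  obtain ⟨hx0, hx1⟩ := hx
  have hsum : Summable (fun k => c k * x ^ k) :=
    summable_pow_coeff abs_c_le (by rwa [abs_of_nonneg hx0])
  have h0 : c 0 * x ^ 0 = 1 := by simp [c_zero]
  have := Summable.le_tsum hsum 0 (fun j _ => by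
    have := (c_pos j).le
    positivity)
  rw [h0] at this
  exact this

lemma sqrt_mul_f {x : ℝ} (hx : x ∈ Ico (0:ℝ) 1) : Real.sqrt (1 - x) * f x = 1 := by
  have h1 : (0:ℝ) ≤ 1 - x := by linarith [hx.2]
  have hp0 : 0 ≤ Real.sqrt (1 - x) * f x := by
    have := one_le_f hx
    have := Real.sqrt_nonneg (1 - x)
    nlinarith
  have h2 : (Real.sqrt (1 - x) * f x) ^ 2 = 1 := by
    rw [mul_pow, Real.sq_sqrt h1]
    nlinarith [f_sq hx]
  calc Real.sqrt (1 - x) * f x = Real.sqrt ((Real.sqrt (1 - x) * f x) ^ 2) :=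
        (Real.sqrt_sq hp0).symm
    _ = 1 := by rw [h2, Real.sqrt_one]

lemma g_closed {x : ℝ} (hx : x ∈ Ico (0:ℝ) 1) :
    g x * Real.sqrt (1 - x) = -Real.log (1 - x) := by
  obtain ⟨hx0, hx1⟩ := hx
  have key : ∀ y ∈ Icc (0:ℝ) x,
      HasDerivAt (fun z => g z * Real.sqrt (1 - z) + Real.log (1 - z)) 0 y := by
    intro y hy
    have hylt : |y| < 1 := abs_lt_one_of_Icc hy hx1
    have hy1 : (0:ℝ) < 1 - y := by
      have := (abs_lt.1 hylt).2; linarith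
    have hdg : HasDerivAt g (∑' k : ℕ, a k * (k * y ^ (k - 1))) y :=
      hasDerivAt_tsum_pow abs_a_le hylt
    set D := ∑' k : ℕ, a k * (k * y ^ (k - 1)) with hD
    have hsub : HasDerivAt (fun z : ℝ => 1 - z) (-1) y := (hasDerivAt_id y).const_sub 1
    have hsq : HasDerivAt (fun z => Real.sqrt (1 - z)) (1 / (2 * Real.sqrt (1 - y)) * (-1)) y :=
      (Real.hasDerivAt_sqrt (ne_of_gt hy1)).comp y hsub
    have hlog : HasDerivAt (fun z => Real.log (1 - z)) ((1 - y)⁻¹ * (-1)) y :=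
      (Real.hasDerivAt_log (ne_of_gt hy1)).comp y hsub
    have hψ := (hdg.mul hsq).add hlog
    have hode := g_ode hylt
    rw [← hD] at hode
    set s := Real.sqrt (1 - y) with hs
    have hspos : 0 < s := Real.sqrt_pos.2 hy1
    have hs2 : s ^ 2 = 1 - y := Real.sq_sqrt hy1.le
    have hsf : s * f y = 1 := sqrt_mul_f ⟨by linarith [hy.1], by linarith [hy.2]⟩
    have hzero : D * s + g y * (1 / (2 * s) * (-1)) + (1 - y)⁻¹ * (-1) = 0 := by
      have hDval : D = (g y + 2 * f y) / (2 * (1 - y)) := by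
        field_simp
        linarith [hode]
      rw [hDval, ← hs2]
      field_simp
      linear_combination 2 * hsf
    rw [hzero] at hψ
    exact hψ
  have hcont : ContinuousOn (fun z => g z * Real.sqrt (1 - z) + Real.log (1 - z)) (Icc 0 x) :=
    fun y hy => ((key y hy).continuousAt).continuousWithinAt
  have := constant_of_has_deriv_right_zero hcont
    (fun y hy => ((key y (Ico_subset_Icc_self hy)).hasDerivWithinAt)) x
    (right_mem_Icc.2 hx0)
  rw [g_zero] at this
  simp only [sub_zero, Real.sqrt_one, Real.log_one] at this
  linarith [this]

lemma hasSum_g {x : ℝ} (hx : x ∈ Ico (0:ℝ) 1) :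
    HasSum (fun k => a k * x ^ k) (-Real.log (1 - x) / Real.sqrt (1 - x)) := by
  have hsum : Summable (fun k => a k * x ^ k) :=
    summable_pow_coeff abs_a_le (by rw [abs_of_nonneg hx.1]; exact hx.2)
  have hval : g x = -Real.log (1 - x) / Real.sqrt (1 - x) := by
    have hs : 0 < Real.sqrt (1 - x) := Real.sqrt_pos.2 (by linarith [hx.2])
    field_simp
    linarith [g_closed hx]
  have := hsum.hasSum
  rw [show (∑' k, a k * x ^ k) = g x from rfl, hval] at this
  exact this

lemma integrableOn_log_Ioc : IntegrableOn Real.log (Ioc 0 (π/2)) := by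
  have hπ : (1:ℝ) ≤ π / 2 := by linarith [Real.pi_gt_three]
  apply integrableOn_Ioc_of_intervalIntegral_norm_bounded_left
    (a := fun i : ℕ => 1 / (i + 1)) (l := Filter.atTop) (I := 6)
  · intro i
    have hi : (0:ℝ) < 1 / (i + 1) := by positivity
    have h0 : (0:ℝ) ∉ Set.uIcc (1 / ((i:ℝ) + 1)) (π / 2) := by
      rw [Set.mem_uIcc]
      push_neg
      constructor <;> intro h <;> nlinarith [hi, Real.pi_gt_three]
    exact (intervalIntegrable_log h0).1
  · exact tendsto_one_div_add_atTop_nhds_zero_nat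
  · filter_upwards with i
    have hi : (0:ℝ) < 1 / (i + 1) := by positivity
    have hi1 : 1 / ((i:ℝ) + 1) ≤ 1 := by
      rw [div_le_one (by positivity)]; linarith [Nat.cast_nonneg (α := ℝ) i]
    have hile : 1 / ((i:ℝ) + 1) ≤ π / 2 := le_trans hi1 hπ
    set a : ℝ := 1 / ((i:ℝ) + 1) with ha
    -- bound ‖log x‖ ≤ -log x + 2 on (0, π/2]
    have hbound : ∀ x ∈ Ioc a (π/2), ‖Real.log x‖ ≤ -Real.log x + 2 := by
      intro x hx
      have hx0 : 0 < x := lt_of_lt_of_le hi hx.1.le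
      rcases le_or_gt x 1 with h | h
      · rw [Real.norm_eq_abs, abs_of_nonpos (Real.log_nonpos hx0.le h)]
        linarith
      · rw [Real.norm_eq_abs, abs_of_nonneg (Real.log_nonneg h.le)]
        have h1 : Real.log x ≤ x - 1 := Real.log_le_sub_one_of_pos hx0
        have h2 : x ≤ π / 2 := hx.2
        nlinarith [Real.pi_le_four]
    have hint1 : IntegrableOn (fun x => ‖Real.log x‖) (Ioc a (π/2)) := by
      have h0 : (0:ℝ) ∉ Set.uIcc a (π / 2) := by
        rw [Set.mem_uIcc]; push_neg
        constructor <;> intro h <;> nlinarith [hi, Real.pi_gt_three]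
      exact (intervalIntegrable_log h0).1.norm
    have hint2 : IntegrableOn (fun x => -Real.log x + 2) (Ioc a (π/2)) := by
      have h0 : (0:ℝ) ∉ Set.uIcc a (π / 2) := by
        rw [Set.mem_uIcc]; push_neg
        constructor <;> intro h <;> nlinarith [hi, Real.pi_gt_three]
      exact ((intervalIntegrable_log h0).1.neg).add (integrableOn_const measure_Ioc_lt_top.ne)
    calc ∫ x in Ioc a (π/2), ‖Real.log x‖
        ≤ ∫ x in Ioc a (π/2), (-Real.log x + 2) :=
          setIntegral_mono_on hint1 hint2 measurableSet_Ioc hbound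
      _ = ∫ x in a..(π/2), (-Real.log x + 2) := by
          rw [intervalIntegral.integral_of_le hile]
      _ ≤ 6 := by
          have hIl : IntervalIntegrable (fun x => Real.log x) volume a (π/2) :=
            intervalIntegrable_log (by
              rw [Set.mem_uIcc]; push_neg
              constructor <;> intro h <;> nlinarith [hi, Real.pi_gt_three])
          have hadd := intervalIntegral.integral_add (a := a) (b := π/2) (μ := volume)
            (f := fun x => -Real.log x) (g := fun _ => (2:ℝ)) hIl.neg intervalIntegrable_const
          rw [hadd, intervalIntegral.integral_neg,
            integral_log]
          simp only [intervalIntegral.integral_const, smul_eq_mul]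
          have hl1 : a * Real.log a ≤ 0 :=
            mul_nonpos_of_nonneg_of_nonpos hi.le (Real.log_nonpos hi.le hi1)
          have hl2 : 0 ≤ Real.log (π/2) := Real.log_nonneg hπ
          have hl3 : Real.log (π/2) ≤ π/2 - 1 := by
            have := Real.log_le_sub_one_of_pos (show (0:ℝ) < π/2 by linarith [Real.pi_gt_three])
            linarith
          have hl0 : 0 ≤ π/2 * Real.log (π/2) :=
            mul_nonneg (by linarith [Real.pi_gt_three]) hl2
          have hπ4 := Real.pi_le_four
          have hπ3 := Real.pi_gt_three
          linarith

lemma integrableOn_log_sin : IntegrableOn (fun x => Real.log (sin x)) (Ioc 0 (π/2)) := by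
  have hmeas : AEStronglyMeasurable (fun x => Real.log (sin x))
      (volume.restrict (Ioc 0 (π/2))) :=
    (Real.measurable_log.comp Real.measurable_sin).aestronglyMeasurable
  have hG : IntegrableOn (fun x => -Real.log x + 2) (Ioc 0 (π/2)) :=
    integrableOn_log_Ioc.neg.add (integrableOn_const measure_Ioc_lt_top.ne)
  apply Integrable.mono hG hmeas
  rw [ae_restrict_iff' measurableSet_Ioc]
  filter_upwards with x hx
  have hx0 : 0 < x := hx.1
  have hx2 : x ≤ π / 2 := hx.2
  have hsin0 : 0 < sin x := Real.sin_pos_of_pos_of_lt_pi hx0 (by linarith [Real.pi_gt_three])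
  have hsin1 : sin x ≤ 1 := Real.sin_le_one x
  have hjordan : 2 / π * x ≤ sin x := Real.mul_le_sin hx0.le hx2
  have hlog1 : Real.log (sin x) ≤ 0 := Real.log_nonpos hsin0.le hsin1
  have hlow : Real.log x + Real.log (2/π) ≤ Real.log (sin x) := by
    rw [← Real.log_mul (ne_of_gt hx0) (by positivity)]
    apply Real.log_le_log (by positivity)
    linarith [hjordan]
  have hl2π : -2 ≤ Real.log (2/π) := by
    have h1 : Real.log (2/π) = -Real.log (π/2) := by
      rw [← Real.log_inv]; norm_num
    have h2 : Real.log (π/2) ≤ π/2 - 1 :=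
      Real.log_le_sub_one_of_pos (by linarith [Real.pi_gt_three])
    have := Real.pi_le_four
    nlinarith
  have hG0 : 0 ≤ -Real.log x + 2 := by
    rcases le_or_gt x 1 with h | h
    · have := Real.log_nonpos hx0.le h; linarith
    · have h1 : Real.log x ≤ x - 1 := Real.log_le_sub_one_of_pos hx0
      have := Real.pi_le_four
      nlinarith
  rw [Real.norm_eq_abs, Real.norm_eq_abs, abs_of_nonpos hlog1, abs_of_nonneg hG0]
  linarith

lemma intInt_log_sin : IntervalIntegrable (fun x => Real.log (sin x)) volume 0 (π/2) := by
  rw [intervalIntegrable_iff_integrableOn_Ioc_of_le (by positivity)]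
  exact integrableOn_log_sin

lemma intInt_log_sin' : IntervalIntegrable (fun x => Real.log (sin x)) volume (π/2) π := by
  have h := (intInt_log_sin.comp_sub_left π)
  have e : (fun x => Real.log (sin (π - x))) = (fun x => Real.log (sin x)) := by
    funext x; rw [Real.sin_pi_sub]
  rw [e] at h
  simpa [sub_half] using h.symm

lemma intInt_log_cos : IntervalIntegrable (fun x => Real.log (cos x)) volume 0 (π/2) := by
  have h := (intInt_log_sin.comp_sub_left (π/2))
  have e : (fun x => Real.log (sin (π/2 - x))) = (fun x => Real.log (cos x)) := by
    funext x; rw [Real.sin_pi_div_two_sub]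
  rw [e] at h
  simpa using h.symm

lemma hcos_eq : ∫ x in (0:ℝ)..(π/2), Real.log (cos x)
    = ∫ x in (0:ℝ)..(π/2), Real.log (sin x) := by
  calc ∫ x in (0:ℝ)..(π/2), Real.log (cos x)
      = ∫ x in (0:ℝ)..(π/2), Real.log (sin (π/2 - x)) := by
        apply intervalIntegral.integral_congr
        intro x _
        simp only [Real.sin_pi_div_two_sub]
    _ = ∫ x in (π/2 - π/2)..(π/2 - 0), Real.log (sin x) :=
        intervalIntegral.integral_comp_sub_left (fun x => Real.log (sin x)) (π/2)
    _ = ∫ x in (0:ℝ)..(π/2), Real.log (sin x) := by norm_num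

lemma integral_log_sin_eq : ∫ x in (0:ℝ)..(π/2), Real.log (sin x) = -(π/2) * Real.log 2 := by
  have hsecond : ∫ x in (π/2)..π, Real.log (sin x)
      = ∫ x in (0:ℝ)..(π/2), Real.log (sin x) := by
    calc ∫ x in (π/2)..π, Real.log (sin x)
        = ∫ x in (π - π/2)..(π - 0), Real.log (sin x) := by norm_num [sub_half]
      _ = ∫ x in (0:ℝ)..(π/2), Real.log (sin (π - x)) :=
          (intervalIntegral.integral_comp_sub_left (fun x => Real.log (sin x)) π).symm
      _ = ∫ x in (0:ℝ)..(π/2), Real.log (sin x) := by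
          apply intervalIntegral.integral_congr
          intro x _
          simp only [Real.sin_pi_sub]
  have hfull : ∫ x in (0:ℝ)..π, Real.log (sin x)
      = 2 * ∫ x in (0:ℝ)..(π/2), Real.log (sin x) := by
    rw [← intervalIntegral.integral_add_adjacent_intervals intInt_log_sin intInt_log_sin',
      hsecond]
    ring
  have hdouble : ∫ x in (0:ℝ)..(π/2), Real.log (sin (2*x))
      = ∫ x in (0:ℝ)..(π/2), Real.log (sin x) := by
    have h2 := intervalIntegral.integral_comp_mul_left (a := (0:ℝ)) (b := π/2)
      (fun x => Real.log (sin x)) (c := 2) (by norm_num)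
    rw [show (2:ℝ) * (π/2) = π by ring, show (2:ℝ) * 0 = 0 by ring] at h2
    rw [h2, hfull, smul_eq_mul]
    ring
  have hsplit : ∫ x in (0:ℝ)..(π/2), Real.log (sin (2*x))
      = ∫ x in (0:ℝ)..(π/2), (Real.log 2 + Real.log (sin x) + Real.log (cos x)) := by
    apply intervalIntegral.integral_congr_ae
    have hae : ∀ᵐ x : ℝ, x ≠ π/2 := by
      rw [MeasureTheory.ae_iff]
      have he : {x : ℝ | ¬ x ≠ π/2} = {π/2} := by ext x; simp
      rw [he]
      exact Real.volume_singleton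
    filter_upwards [hae] with x hne hx
    rw [Set.uIoc_of_le (by positivity : (0:ℝ) ≤ π/2)] at hx
    have hx0 : 0 < x := hx.1
    have hx2 : x < π / 2 := lt_of_le_of_ne hx.2 hne
    have hs : 0 < sin x := Real.sin_pos_of_pos_of_lt_pi hx0 (by linarith [Real.pi_gt_three])
    have hc : 0 < cos x := Real.cos_pos_of_mem_Ioo ⟨by linarith, hx2⟩
    rw [Real.sin_two_mul,
      Real.log_mul (mul_ne_zero two_ne_zero (ne_of_gt hs)) (ne_of_gt hc),
      Real.log_mul two_ne_zero (ne_of_gt hs)]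
  have hrhs : ∫ x in (0:ℝ)..(π/2), (Real.log 2 + Real.log (sin x) + Real.log (cos x))
      = (π/2) * Real.log 2 + (∫ x in (0:ℝ)..(π/2), Real.log (sin x))
        + ∫ x in (0:ℝ)..(π/2), Real.log (sin x) := by
    rw [intervalIntegral.integral_add (intervalIntegrable_const.add intInt_log_sin)
        intInt_log_cos,
      intervalIntegral.integral_add intervalIntegrable_const intInt_log_sin, hcos_eq]
    simp only [intervalIntegral.integral_const, smul_eq_mul, sub_zero]
  have hkey := hsplit
  rw [hdouble, hrhs] at hkey
  linarith

lemma integral_neg_two_log_cos :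
    ∫ θ in Ioo (0:ℝ) (π/2), (-2) * Real.log (cos θ) = π * Real.log 2 := by
  have hcosA : ∫ x in (0:ℝ)..(π/2), Real.log (cos x) = -(π/2) * Real.log 2 := by
    rw [hcos_eq, integral_log_sin_eq]
  rw [← MeasureTheory.integral_Ioc_eq_integral_Ioo,
    ← intervalIntegral.integral_of_le (by positivity : (0:ℝ) ≤ π/2),
    intervalIntegral.integral_const_mul, hcosA]
  ring

lemma integrableOn_neg_two_log_cos :
    IntegrableOn (fun θ => (-2) * Real.log (cos θ)) (Ioo (0:ℝ) (π/2)) := by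
  have h := intInt_log_cos
  rw [intervalIntegrable_iff_integrableOn_Ioc_of_le (by positivity)] at h
  exact ((h.mono_set Ioo_subset_Ioc_self).const_mul _)

lemma term_nonneg (k : ℕ) {θ : ℝ} (hθ : θ ∈ Ioo (0:ℝ) (π/2)) :
    0 ≤ a k * (sin θ ^ (2*k) * cos θ) := by
  have hs : 0 ≤ sin θ :=
    Real.sin_nonneg_of_nonneg_of_le_pi hθ.1.le (by linarith [hθ.2, Real.pi_gt_three])
  have hc : 0 ≤ cos θ :=
    Real.cos_nonneg_of_mem_Icc ⟨by linarith [hθ.1, Real.pi_gt_three], hθ.2.le⟩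
  have := a_nonneg k
  positivity

lemma term_integrable (k : ℕ) :
    IntegrableOn (fun θ => a k * (sin θ ^ (2*k) * cos θ)) (Ioo (0:ℝ) (π/2)) := by
  have hcont : Continuous (fun θ : ℝ => a k * (sin θ ^ (2*k) * cos θ)) := by
    continuity
  exact (hcont.integrableOn_Icc (a := 0) (b := π/2)).mono_set Ioo_subset_Icc_self

lemma term_integral (k : ℕ) :
    ∫ θ in Ioo (0:ℝ) (π/2), a k * (sin θ ^ (2*k) * cos θ) = a k / (2*(k:ℝ)+1) := by
  rw [← MeasureTheory.integral_Ioc_eq_integral_Ioo,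
    ← intervalIntegral.integral_of_le (by positivity : (0:ℝ) ≤ π/2)]
  have h1 : ∫ x in (0:ℝ)..(π/2), sin x ^ (2*k) * cos x = 1/(2*(k:ℝ)+1) := by
    have h := integral_sin_pow_mul_cos_pow_odd (a := 0) (b := π/2) (2*k) 0
    simp only [mul_zero, zero_add, pow_one, pow_zero, mul_one, Real.sin_zero,
      Real.sin_pi_div_two] at h
    rw [h, integral_pow]
    push_cast
    norm_num
  rw [intervalIntegral.integral_const_mul, h1]
  ring

lemma hasSum_terms {θ : ℝ} (hθ : θ ∈ Ioo (0:ℝ) (π/2)) :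
    HasSum (fun k => a k * (sin θ ^ (2*k) * cos θ)) (-2 * Real.log (cos θ)) := by
  have hc : 0 < cos θ := Real.cos_pos_of_mem_Ioo ⟨by linarith [hθ.1, Real.pi_gt_three], hθ.2⟩
  have hs : 0 ≤ sin θ :=
    Real.sin_nonneg_of_nonneg_of_le_pi hθ.1.le (by linarith [hθ.2, Real.pi_gt_three])
  have hx : sin θ ^ 2 ∈ Ico (0:ℝ) 1 := by
    constructor
    · positivity
    · nlinarith [Real.sin_sq_add_cos_sq θ, hc]
  have hcos2 : 1 - sin θ ^ 2 = cos θ ^ 2 := by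
    nlinarith [Real.sin_sq_add_cos_sq θ]
  have h := (hasSum_g hx).mul_right (cos θ)
  have hval : -Real.log (1 - sin θ ^ 2) / Real.sqrt (1 - sin θ ^ 2) * cos θ
      = -2 * Real.log (cos θ) := by
    rw [hcos2, Real.sqrt_sq hc.le, Real.log_pow]
    field_simp
    push_cast; ring
  rw [hval] at h
  have e : (fun k => a k * (sin θ ^ (2*k) * cos θ))
      = fun k => a k * (sin θ ^ 2) ^ k * cos θ := by
    funext k
    rw [pow_mul]
    ring
  rw [e]
  exact h

lemma tsum_b : (∑' k : ℕ, a k / (2*(k:ℝ)+1)) = π * Real.log 2 := by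
  have hb0 : ∀ k : ℕ, 0 ≤ a k / (2*(k:ℝ)+1) := by
    intro k
    have := a_nonneg k
    positivity
  have key : (∑' k : ℕ, ENNReal.ofReal (a k / (2*(k:ℝ)+1)))
      = ENNReal.ofReal (π * Real.log 2) := by
    calc ∑' k : ℕ, ENNReal.ofReal (a k / (2*(k:ℝ)+1))
        = ∑' k : ℕ, ∫⁻ θ in Ioo (0:ℝ) (π/2),
            ENNReal.ofReal (a k * (sin θ ^ (2*k) * cos θ)) := by
          apply tsum_congr
          intro k
          rw [← MeasureTheory.ofReal_integral_eq_lintegral_ofReal (term_integrable k) ?_,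
            term_integral k]
          rw [Filter.EventuallyLE, ae_restrict_iff' measurableSet_Ioo]
          filter_upwards with θ hθ
          exact term_nonneg k hθ
      _ = ∫⁻ θ in Ioo (0:ℝ) (π/2), ∑' k : ℕ,
            ENNReal.ofReal (a k * (sin θ ^ (2*k) * cos θ)) := by
          refine (MeasureTheory.lintegral_tsum fun k => ?_).symm
          apply Measurable.aemeasurable
          apply ENNReal.measurable_ofReal.comp
          exact (by continuity : Continuous (fun θ : ℝ => a k * (sin θ ^ (2*k) * cos θ))).measurable
      _ = ∫⁻ θ in Ioo (0:ℝ) (π/2), ENNReal.ofReal ((-2) * Real.log (cos θ)) := by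
          apply MeasureTheory.setLIntegral_congr_fun measurableSet_Ioo
          intro θ hθ
          dsimp only
          have h := hasSum_terms hθ
          rw [← ENNReal.ofReal_tsum_of_nonneg (fun k => term_nonneg k hθ) h.summable,
            h.tsum_eq]
      _ = ENNReal.ofReal (∫ θ in Ioo (0:ℝ) (π/2), (-2) * Real.log (cos θ)) := by
          refine (MeasureTheory.ofReal_integral_eq_lintegral_ofReal
            integrableOn_neg_two_log_cos ?_).symm
          rw [Filter.EventuallyLE, ae_restrict_iff' measurableSet_Ioo]
          filter_upwards with θ hθ
          have hc1 : cos θ ≤ 1 := Real.cos_le_one θ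
          have hc : 0 < cos θ :=
            Real.cos_pos_of_mem_Ioo ⟨by linarith [hθ.1, Real.pi_gt_three], hθ.2⟩
          have := Real.log_nonpos hc.le hc1
          simp only [Pi.zero_apply]
          nlinarith
      _ = ENNReal.ofReal (π * Real.log 2) := by rw [integral_neg_two_log_cos]
  have hne : ∀ k : ℕ, ENNReal.ofReal (a k / (2*(k:ℝ)+1)) ≠ ⊤ :=
    fun k => ENNReal.ofReal_ne_top
  have h2 := ENNReal.tsum_toReal_eq hne
  rw [key] at h2
  have h3 : ENNReal.toReal (ENNReal.ofReal (π * Real.log 2)) = π * Real.log 2 := by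
    rw [ENNReal.toReal_ofReal]
    have : 0 ≤ Real.log 2 := Real.log_nonneg (by norm_num)
    positivity
  rw [h3] at h2
  rw [h2]
  apply tsum_congr
  intro k
  rw [ENNReal.toReal_ofReal (hb0 k)]

end Stmt7

theorem stmt_7 :
    4 * ∑' k : ℕ, ((Nat.choose (2 * k) k : ℝ) / 4 ^ k) *
        (2 * H (2 * k) - H k) / (2 * (k : ℝ) + 1) =
      4 * Real.pi * Real.log 2 := by
  have h : (∑' k : ℕ, ((Nat.choose (2 * k) k : ℝ) / 4 ^ k) *
      (2 * H (2 * k) - H k) / (2 * (k : ℝ) + 1)) = Real.pi * Real.log 2 := by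
    rw [← Stmt7.tsum_b]
    apply tsum_congr
    intro k
    rfl
  rw [h]
  ring
end
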